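/- arXiv:1801.07025 — 3 statements merged into one kernel-verified Lean document; each statement's English description precedes it below -/
import Mathlib

section
/- There exists a positive constant c such that for every natural number d, every finite simple graph of minimum degree at least c·d² has a star-cover in which every star has size at least d. -/
open SimpleGraph

/-- The degree of a vertex `v` in a simple graph `H`. -/
noncomputable def gdeg {V : Type} (H : SimpleGraph V) (v : V) : ℕ :=
  Nat.card (H.neighborSet v)

/-- The degree of a vertex `v` in a subgraph `H` of `G`. -/
noncomputable def subdeg {V : Type} {G : SimpleGraph V} (H : G.Subgraph) (v : V) : ℕ :=
  Nat.card (H.neighborSet v)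

/-- A subgraph is a star if it is a tree with at most one vertex of degree greater than 1. -/
def IsStar {V : Type} {G : SimpleGraph V} (H : G.Subgraph) : Prop :=
  H.coe.IsTree ∧ {v ∈ H.verts | 1 < subdeg H v}.Subsingleton

/-- `G` has a star-cover in which every star has size (number of edges) at least `d`:
a collection of vertex-disjoint stars, each a subgraph of `G`, covering all vertices. -/
def HasStarCover {V : Type} (G : SimpleGraph V) (d : ℕ) : Prop :=
  ∃ (m : ℕ) (S : Fin m → G.Subgraph),
    (∀ i, IsStar (S i)) ∧
    (∀ i, d ≤ (S i).edgeSet.ncard) ∧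
    (∀ i j, i ≠ j → Disjoint (S i).verts (S j).verts) ∧
    (∀ v, ∃ i, v ∈ (S i).verts)

namespace StarCoverAux

variable {V : Type} {G : SimpleGraph V}

/-- Any graph all of whose edges pass through a fixed vertex `z` is acyclic. -/
lemma isAcyclic_of_center {W : Type} (Gr : SimpleGraph W) (z : W)
    (h : ∀ a b, Gr.Adj a b → a = z ∨ b = z) : Gr.IsAcyclic := by
  intro v c hc
  have h3l := hc.three_le_length
  cases c with
  | nil => simp at h3l
  | cons h1 q =>
    cases q with
    | nil => simp at h3l
    | cons h2 r =>
      cases r with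
      | nil => simp at h3l
      | cons h3 p =>
        rename_i b c2 c3
        have hnodup := hc.support_nodup
        simp only [SimpleGraph.Walk.support_cons, List.tail_cons, List.nodup_cons] at hnodup
        obtain ⟨hb, hc2, -⟩ := hnodup
        have hc3p : c3 ∈ p.support := SimpleGraph.Walk.start_mem_support p
        have hvp : v ∈ p.support := SimpleGraph.Walk.end_mem_support p
        have hbc2 : b ≠ c2 := fun hEq => hb (by simp [hEq])
        have hbc3 : b ≠ c3 := fun hEq => hb (by simp [hEq, hc3p])
        have hc2v : c2 ≠ v := fun hEq => hc2 (by rw [hEq]; exact hvp)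
        rcases h _ _ h1 with h1' | h1'
        · rcases h _ _ h2 with h2' | h2'
          · rcases h _ _ h3 with h3' | h3'
            · exact hbc2 (h2'.trans h3'.symm)
            · exact hbc3 (h2'.trans h3'.symm)
          · exact hc2v (h2'.trans h1'.symm)
        · rcases h _ _ h3 with h3' | h3'
          · exact hbc2 (h1'.trans h3'.symm)
          · exact hbc3 (h1'.trans h3'.symm)

/-- The star subgraph with center `z` and leaves `L`. -/
def starSub (G : SimpleGraph V) (z : V) (L : Set V) (hL : ∀ l ∈ L, G.Adj z l) : G.Subgraph where
  verts := insert z L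
  Adj a b := (a = z ∧ b ∈ L) ∨ (b = z ∧ a ∈ L)
  adj_sub := by
    rintro a b (⟨rfl, hb⟩ | ⟨rfl, ha⟩)
    · exact hL b hb
    · exact (hL a ha).symm
  edge_vert := by
    rintro a b (⟨rfl, hb⟩ | ⟨rfl, ha⟩)
    · exact Set.mem_insert _ _
    · exact Set.mem_insert_of_mem _ ha
  symm := by
    constructor
    rintro a b (⟨rfl, hb⟩ | ⟨rfl, ha⟩)
    · exact Or.inr ⟨rfl, hb⟩
    · exact Or.inl ⟨rfl, ha⟩

variable {z : V} {L : Set V} {hL : ∀ l ∈ L, G.Adj z l}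

lemma starSub_verts : (starSub G z L hL).verts = insert z L := rfl

lemma starSub_adj {a b : V} :
    (starSub G z L hL).Adj a b ↔ (a = z ∧ b ∈ L) ∨ (b = z ∧ a ∈ L) := Iff.rfl

lemma starSub_isStar (hz : z ∉ L) : IsStar (starSub G z L hL) := by
  constructor
  · constructor
    · -- connected
      rw [SimpleGraph.connected_iff]
      refine ⟨?_, ⟨⟨z, Set.mem_insert _ _⟩⟩⟩
      have key : ∀ a : (starSub G z L hL).verts,
          (starSub G z L hL).coe.Reachable a ⟨z, Set.mem_insert _ _⟩ := by
        intro a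
        rcases eq_or_ne (a : V) z with ha | ha
        · have : a = (⟨z, Set.mem_insert _ _⟩ : (starSub G z L hL).verts) := Subtype.ext ha
          rw [this]
        · have haL : (a : V) ∈ L := a.2.resolve_left ha
          refine SimpleGraph.Adj.reachable ?_
          rw [SimpleGraph.Subgraph.coe_adj]
          exact Or.inr ⟨rfl, haL⟩
      intro a b
      exact (key a).trans (key b).symm
    · -- acyclic
      apply isAcyclic_of_center _ (⟨z, Set.mem_insert _ _⟩ : (starSub G z L hL).verts)
      intro a b hab
      rw [SimpleGraph.Subgraph.coe_adj] at hab
      rcases hab with ⟨ha, -⟩ | ⟨hb, -⟩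
      · exact Or.inl (Subtype.ext ha)
      · exact Or.inr (Subtype.ext hb)
  · -- subsingleton of branch vertices
    intro a ha b hb
    have key : ∀ x, x ∈ {v ∈ (starSub G z L hL).verts | 1 < subdeg (starSub G z L hL) v} → x = z := by
      intro x hx
      by_contra hxz
      obtain ⟨hxv, hxd⟩ := hx
      have hxL : x ∈ L := by
        rcases hxv with h | h
        · exact absurd h hxz
        · exact h
      have : (starSub G z L hL).neighborSet x = {z} := by
        ext w
        simp only [SimpleGraph.Subgraph.mem_neighborSet, starSub_adj, Set.mem_singleton_iff]
        constructor
        · rintro (⟨h, -⟩ | ⟨h, -⟩)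
          · exact absurd h hxz
          · exact h
        · rintro rfl
          exact Or.inr ⟨rfl, hxL⟩
      rw [subdeg, this] at hxd
      have : Nat.card ({z} : Set V) = 1 := Nat.card_unique
      omega
    rw [key a ha, key b hb]

lemma starSub_edgeSet : (starSub G z L hL).edgeSet = (fun l => s(z, l)) '' L := by
  ext e
  induction e using Sym2.ind with
  | _ a b =>
    rw [SimpleGraph.Subgraph.mem_edgeSet, starSub_adj]
    constructor
    · rintro (⟨rfl, hb⟩ | ⟨rfl, ha⟩)
      · exact ⟨b, hb, rfl⟩
      · exact ⟨a, ha, Sym2.eq_swap⟩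
    · rintro ⟨l, hl, hlb⟩
      rcases Sym2.eq_iff.mp hlb with ⟨h1, h2⟩ | ⟨h1, h2⟩
      · exact Or.inl ⟨h1.symm, h2 ▸ hl⟩
      · exact Or.inr ⟨h1.symm, h2 ▸ hl⟩

lemma starSub_edgeSet_ncard (hz : z ∉ L) :
    (starSub G z L hL).edgeSet.ncard = L.ncard := by
  rw [starSub_edgeSet]
  apply Set.ncard_image_of_injOn
  intro a ha b hb hab
  rcases Sym2.eq_iff.mp hab with ⟨-, h⟩ | ⟨h1, h2⟩
  · exact h
  · exact absurd (h2 ▸ ha : z ∈ L) hz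


open Finset in
theorem main_own [Fintype V] [DecidableEq V] (G : SimpleGraph V) (d : ℕ)
    (hdeg : ∀ v, 9 * d ^ 2 ≤ Nat.card (G.neighborSet v)) :
    ∃ (D : Finset V) (own : V → V),
      (∀ v, own v ∈ D) ∧ (∀ v ∈ D, own v = v) ∧
      (∀ v, v ∉ D → G.Adj (own v) v) ∧
      (∀ z ∈ D, d ≤ (Finset.univ.filter fun v => own v = z ∧ v ≠ z).card) := by
  classical
  -- neighbor finsets
  set NBF : V → Finset V := fun v => Finset.univ.filter (fun w => G.Adj v w) with hNBF
  have hNB : ∀ v w, w ∈ NBF v ↔ G.Adj v w := by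
    intro v w; simp [hNBF]
  have hdegF : ∀ v, 9 * d ^ 2 ≤ (NBF v).card := by
    intro v
    have h1 : G.neighborSet v = ↑(NBF v) := by
      ext w; simp [hNBF, SimpleGraph.mem_neighborSet]
    have := hdeg v
    rwa [Nat.card_coe_set_eq, h1, Set.ncard_coe_finset] at this
  -- domination
  set dom : Finset V → V → Prop := fun C v => v ∈ C ∨ ∃ w ∈ C, G.Adj v w with hdom
  set und : Finset V → Finset V := fun C => Finset.univ.filter (fun v => ¬ dom C v) with hund
  have hund_mem : ∀ C v, v ∈ und C ↔ ¬ dom C v := by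
    intro C v; simp [hund]
  set pot : Finset V → ℕ := fun C => (2 * d + 1) * C.card + (und C).card with hpot
  obtain ⟨C, -, hmin0⟩ := Finset.exists_min_image (Finset.univ : Finset (Finset V)) pot
    ⟨∅, Finset.mem_univ ∅⟩
  have hmin : ∀ C', pot C ≤ pot C' := fun C' => hmin0 C' (Finset.mem_univ _)
  -- F1 : crowding bound
  have hF1 : ∀ w : V, ((und C) ∩ insert w (NBF w)).card ≤ 2 * d + 1 := by
    intro w
    by_cases hw : w ∈ C
    · have hemp : (und C) ∩ insert w (NBF w) = ∅ := by
        ext v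
        simp only [Finset.mem_inter, Finset.mem_insert, Finset.notMem_empty, iff_false, not_and]
        intro hv hv2
        have hdomv : dom C v := by
          rcases hv2 with rfl | hv2
          · exact Or.inl hw
          · exact Or.inr ⟨w, hw, ((hNB w v).mp hv2).symm⟩
        exact ((hund_mem C v).mp hv) hdomv
      rw [hemp]; simp
    · have h1 := hmin (insert w C)
      have hundeq : und (insert w C) = (und C) \ (insert w (NBF w)) := by
        ext v
        simp only [hund_mem, Finset.mem_sdiff, Finset.mem_insert]
        constructor
        · intro hnd
          constructor
          · intro hdomv
            apply hnd
            rcases hdomv with hv | ⟨x, hx, hax⟩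
            · exact Or.inl (Finset.mem_insert_of_mem hv)
            · exact Or.inr ⟨x, Finset.mem_insert_of_mem hx, hax⟩
          · intro hv
            apply hnd
            rcases hv with rfl | hv
            · exact Or.inl (Finset.mem_insert_self _ _)
            · exact Or.inr ⟨w, Finset.mem_insert_self _ _, ((hNB w v).mp hv).symm⟩
        · rintro ⟨hnd, hnin⟩ hdomv
          rcases hdomv with hv | ⟨x, hx, hax⟩
          · rcases Finset.mem_insert.mp hv with rfl | hv
            · exact hnin (Or.inl rfl)
            · exact hnd (Or.inl hv)
          · rcases Finset.mem_insert.mp hx with rfl | hx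
            · exact hnin (Or.inr ((hNB x v).mpr hax.symm))
            · exact hnd (Or.inr ⟨x, hx, hax⟩)
      have hcard : (insert w C).card = C.card + 1 := Finset.card_insert_of_notMem hw
      have hsd : ((und C) \ (insert w (NBF w))).card + ((und C) ∩ (insert w (NBF w))).card
          = (und C).card := Finset.card_sdiff_add_card_inter _ _
      simp only [hpot, hundeq, hcard] at h1
      have hexp : (2 * d + 1) * (C.card + 1) = (2 * d + 1) * C.card + (2 * d + 1) := by ring
      rw [hexp] at h1
      omega
  -- resources
  set Rs : Finset V := (Finset.univ \ C) \ und C with hRs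
  have hRs_mem : ∀ v, v ∈ Rs ↔ (v ∉ C ∧ v ∉ und C) := by
    intro v; simp [hRs]
  -- F2 : expansion from C
  have hF2 : ∀ Q ⊆ C, 2 * d * Q.card ≤ (Q.biUnion (fun x => (NBF x) ∩ Rs)).card := by
    intro Q hQ
    have h1 := hmin (C \ Q)
    have hmono : und C ⊆ und (C \ Q) := by
      intro v hv
      rw [hund_mem] at hv ⊢
      intro hdomv
      apply hv
      rcases hdomv with hv' | ⟨x, hx, hax⟩
      · exact Or.inl (Finset.mem_sdiff.mp hv').1
      · exact Or.inr ⟨x, (Finset.mem_sdiff.mp hx).1, hax⟩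
    set newly := und (C \ Q) \ und C with hnewly
    have hsplit : newly.card + (und C).card = (und (C \ Q)).card :=
      Finset.card_sdiff_add_card_eq_card hmono
    have hcardCQ : (C \ Q).card + Q.card = C.card := by
      rw [Finset.card_sdiff_add_card_eq_card hQ]
    have hnewlycard : (2 * d + 1) * Q.card ≤ newly.card := by
      simp only [hpot] at h1
      have hexp : (2 * d + 1) * C.card = (2 * d + 1) * (C \ Q).card + (2 * d + 1) * Q.card := by
        rw [← hcardCQ]; ring
      omega
    have hsub : newly \ Q ⊆ Q.biUnion (fun x => NBF x ∩ Rs) := by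
      intro v hv
      obtain ⟨hvnew, hvQ⟩ := Finset.mem_sdiff.mp hv
      obtain ⟨hvund', hvund⟩ := Finset.mem_sdiff.mp hvnew
      rw [hund_mem] at hvund'
      have hdomv : dom C v := by
        by_contra hnd
        exact hvund ((hund_mem C v).mpr hnd)
      have hvC : v ∉ C := by
        intro hvC
        exact hvund' (Or.inl (Finset.mem_sdiff.mpr ⟨hvC, hvQ⟩))
      obtain ⟨x, hxC, hax⟩ : ∃ w ∈ C, G.Adj v w := by
        rcases hdomv with h | h
        · exact absurd h hvC
        · exact h
      have hxQ : x ∈ Q := by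
        by_contra hxQ
        exact hvund' (Or.inr ⟨x, Finset.mem_sdiff.mpr ⟨hxC, hxQ⟩, hax⟩)
      refine Finset.mem_biUnion.mpr ⟨x, hxQ, ?_⟩
      refine Finset.mem_inter.mpr ⟨(hNB x v).mpr hax.symm, ?_⟩
      rw [hRs_mem]
      refine ⟨hvC, ?_⟩
      intro hvundC
      exact ((hund_mem C v).mp hvundC) hdomv
    have h2 : newly.card ≤ (newly \ Q).card + Q.card := by
      have : newly ⊆ (newly \ Q) ∪ Q := by
        intro v hv
        by_cases h : v ∈ Q
        · exact Finset.mem_union_right _ h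
        · exact Finset.mem_union_left _ (Finset.mem_sdiff.mpr ⟨hv, h⟩)
      calc newly.card ≤ ((newly \ Q) ∪ Q).card := Finset.card_le_card this
        _ ≤ (newly \ Q).card + Q.card := Finset.card_union_le _ _
    have h3 : (newly \ Q).card ≤ (Q.biUnion (fun x => NBF x ∩ Rs)).card :=
      Finset.card_le_card hsub
    have hexp2 : (2 * d + 1) * Q.card = 2 * d * Q.card + Q.card := by ring
    omega
  -- F4 : any vertex has few undominated neighbors
  have hF4 : ∀ r : V, ((und C) ∩ NBF r).card ≤ 2 * d + 1 := by
    intro r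
    refine le_trans (Finset.card_le_card ?_) (hF1 r)
    intro v hv
    obtain ⟨h1, h2⟩ := Finset.mem_inter.mp hv
    exact Finset.mem_inter.mpr ⟨h1, Finset.mem_insert_of_mem h2⟩
  -- F3 : undominated vertices have many resource neighbors
  have hF3 : ∀ u ∈ und C, 9 * d ^ 2 ≤ (NBF u ∩ Rs).card + 2 * d := by
    intro u hu
    have hundu := (hund_mem C u).mp hu
    have h0 : NBF u ∩ C = ∅ := by
      ext x
      simp only [Finset.mem_inter, Finset.notMem_empty, iff_false, not_and]
      intro hx hxC
      exact hundu (Or.inr ⟨x, hxC, (hNB u x).mp hx⟩)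
    have h1 : (NBF u ∩ und C).card ≤ 2 * d := by
      have hsub : NBF u ∩ und C ⊆ ((und C) ∩ insert u (NBF u)).erase u := by
        intro v hv
        obtain ⟨hv1, hv2⟩ := Finset.mem_inter.mp hv
        refine Finset.mem_erase.mpr ⟨?_, Finset.mem_inter.mpr ⟨hv2, Finset.mem_insert_of_mem hv1⟩⟩
        intro hEq
        exact G.irrefl (hEq ▸ (hNB u v).mp hv1)
      have hucard : u ∈ (und C) ∩ insert u (NBF u) :=
        Finset.mem_inter.mpr ⟨hu, Finset.mem_insert_self _ _⟩
      have := Finset.card_le_card hsub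
      rw [Finset.card_erase_of_mem hucard] at this
      have h2 := hF1 u
      omega
    have hcover : NBF u ⊆ (NBF u ∩ C) ∪ (NBF u ∩ und C) ∪ (NBF u ∩ Rs) := by
      intro v hv
      by_cases hvC : v ∈ C
      · exact Finset.mem_union_left _ (Finset.mem_union_left _ (Finset.mem_inter.mpr ⟨hv, hvC⟩))
      by_cases hvund : v ∈ und C
      · exact Finset.mem_union_left _ (Finset.mem_union_right _ (Finset.mem_inter.mpr ⟨hv, hvund⟩))
      · exact Finset.mem_union_right _
          (Finset.mem_inter.mpr ⟨hv, (hRs_mem v).mpr ⟨hvC, hvund⟩⟩)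
    have hcard := Finset.card_le_card hcover
    have hcard2 : ((NBF u ∩ C) ∪ (NBF u ∩ und C) ∪ (NBF u ∩ Rs)).card
        ≤ (NBF u ∩ C).card + (NBF u ∩ und C).card + (NBF u ∩ Rs).card := by
      calc ((NBF u ∩ C) ∪ (NBF u ∩ und C) ∪ (NBF u ∩ Rs)).card
          ≤ ((NBF u ∩ C) ∪ (NBF u ∩ und C)).card + (NBF u ∩ Rs).card := Finset.card_union_le _ _
        _ ≤ (NBF u ∩ C).card + (NBF u ∩ und C).card + (NBF u ∩ Rs).card := by
            have := Finset.card_union_le (NBF u ∩ C) (NBF u ∩ und C)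
            omega
    have hdu := hdegF u
    rw [h0] at hcard hcard2
    simp only [Finset.card_empty, Finset.empty_union] at hcard hcard2
    omega
  -- F5 : counting bound for sets of undominated vertices
  have hF5 : ∀ S ⊆ und C, S.card * (9 * d ^ 2)
      ≤ (2 * d + 1) * (S.biUnion fun u => NBF u ∩ Rs).card + S.card * (2 * d) := by
    intro S hS
    set B := S.biUnion (fun u => NBF u ∩ Rs) with hB
    have key : ∑ u ∈ S, (NBF u ∩ Rs).card ≤ (2 * d + 1) * B.card := by
      have step1 : ∀ u ∈ S, (NBF u ∩ Rs).card ≤ (B.filter (fun r => G.Adj u r)).card := by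
        intro u hu
        apply Finset.card_le_card
        intro v hv
        refine Finset.mem_filter.mpr ⟨Finset.mem_biUnion.mpr ⟨u, hu, hv⟩, ?_⟩
        exact (hNB u v).mp (Finset.mem_inter.mp hv).1
      calc ∑ u ∈ S, (NBF u ∩ Rs).card
          ≤ ∑ u ∈ S, (B.filter (fun r => G.Adj u r)).card := Finset.sum_le_sum step1
        _ = ∑ u ∈ S, ∑ r ∈ B, (if G.Adj u r then 1 else 0) := by
            apply Finset.sum_congr rfl
            intro u _
            rw [Finset.card_filter]
        _ = ∑ r ∈ B, ∑ u ∈ S, (if G.Adj u r then 1 else 0) := Finset.sum_comm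
        _ = ∑ r ∈ B, (S.filter (fun u => G.Adj u r)).card := by
            apply Finset.sum_congr rfl
            intro r _
            rw [Finset.card_filter]
        _ ≤ ∑ r ∈ B, (2 * d + 1) := by
            apply Finset.sum_le_sum
            intro r _
            refine le_trans (Finset.card_le_card ?_) (hF4 r)
            intro u hu
            obtain ⟨hu1, hu2⟩ := Finset.mem_filter.mp hu
            exact Finset.mem_inter.mpr ⟨hS hu1, (hNB r u).mpr hu2.symm⟩
        _ = (2 * d + 1) * B.card := by
            rw [Finset.sum_const, smul_eq_mul, mul_comm]
    have lower : S.card * (9 * d ^ 2) ≤ (∑ u ∈ S, (NBF u ∩ Rs).card) + S.card * (2 * d) := by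
      have : ∀ u ∈ S, 9 * d ^ 2 ≤ (NBF u ∩ Rs).card + 2 * d := fun u hu => hF3 u (hS hu)
      calc S.card * (9 * d ^ 2) = ∑ _u ∈ S, 9 * d ^ 2 := by
            rw [Finset.sum_const, smul_eq_mul]
        _ ≤ ∑ u ∈ S, ((NBF u ∩ Rs).card + 2 * d) := Finset.sum_le_sum this
        _ = (∑ u ∈ S, (NBF u ∩ Rs).card) + S.card * (2 * d) := by
            rw [Finset.sum_add_distrib, Finset.sum_const, smul_eq_mul]
    omega
  -- the demander set
  set D : Finset V := C ∪ und C with hD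
  have hRsD : ∀ v ∈ Rs, v ∉ D := by
    intro v hv hvD
    obtain ⟨h1, h2⟩ := (hRs_mem v).mp hv
    rcases Finset.mem_union.mp hvD with h | h
    · exact h1 h
    · exact h2 h
  have hdomD : ∀ v, v ∉ D → ∃ w ∈ C, G.Adj v w := by
    intro v hv
    have hvC : v ∉ C := fun h => hv (Finset.mem_union_left _ h)
    have hvund : v ∉ und C := fun h => hv (Finset.mem_union_right _ h)
    have hdomv : dom C v := by
      by_contra hnd
      exact hvund ((hund_mem C v).mpr hnd)
    rcases hdomv with h | h
    · exact absurd h hvC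
    · exact h
  -- Hall condition
  have hall : ∀ s : Finset ((↥D) × Fin d),
      s.card ≤ (s.biUnion (fun p => NBF (p.1 : V) ∩ Rs)).card := by
    intro s
    set W : Finset V := s.image (fun p => ((p.1 : ↥D) : V)) with hW
    have himgeq : W = (s.image Prod.fst).image (fun x : ↥D => (x : V)) := by
      rw [hW, Finset.image_image]
      rfl
    have hWcard : W.card = (s.image Prod.fst).card := by
      rw [himgeq]
      exact Finset.card_image_of_injective _ Subtype.coe_injective
    have hWD : ∀ w ∈ W, w ∈ D := by
      intro w hw
      rw [hW, Finset.mem_image] at hw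
      obtain ⟨p, -, rfl⟩ := hw
      exact (p.1).2
    set Q := W.filter (fun x => x ∈ C) with hQ
    set Sf := W.filter (fun x => x ∈ und C) with hSf
    have hQC : Q ⊆ C := by
      intro x hx; exact (Finset.mem_filter.mp hx).2
    have hSfund : Sf ⊆ und C := by
      intro x hx; exact (Finset.mem_filter.mp hx).2
    have hsplitW : W.card = Q.card + Sf.card := by
      have h10 := Finset.card_filter_add_card_filter_not (s := W) (p := fun x => x ∈ C)
      have h11 : W.filter (fun x => ¬ x ∈ C) = Sf := by
        apply Finset.filter_congr
        intro x hx
        have hxD := hWD x hx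
        constructor
        · intro hxC
          rcases Finset.mem_union.mp hxD with h | h
          · exact absurd h hxC
          · exact h
        · intro hxund hxC
          exact ((hund_mem C x).mp hxund) (Or.inl hxC)
      rw [h11, ← hQ] at h10
      omega
    have hs_le : s.card ≤ W.card * d := by
      have hsub : s ⊆ (s.image Prod.fst) ×ˢ (Finset.univ : Finset (Fin d)) := by
        intro p hp
        exact Finset.mem_product.mpr ⟨Finset.mem_image_of_mem _ hp, Finset.mem_univ _⟩
      calc s.card ≤ ((s.image Prod.fst) ×ˢ (Finset.univ : Finset (Fin d))).card :=
            Finset.card_le_card hsub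
        _ = (s.image Prod.fst).card * d := by
            rw [Finset.card_product, Finset.card_univ, Fintype.card_fin]
        _ = W.card * d := by rw [hWcard]
    have hBsup : ∀ T, T ⊆ W →
        T.biUnion (fun x => NBF x ∩ Rs) ⊆ s.biUnion (fun p => NBF (p.1 : V) ∩ Rs) := by
      intro T hT v hv
      obtain ⟨x, hxT, hvx⟩ := Finset.mem_biUnion.mp hv
      have hxW := hT hxT
      rw [hW, Finset.mem_image] at hxW
      obtain ⟨p, hp, hpx⟩ := hxW
      refine Finset.mem_biUnion.mpr ⟨p, hp, ?_⟩
      rw [hpx]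
      exact hvx
    rcases le_or_gt Sf.card Q.card with hcase | hcase
    · have h2 := hF2 Q hQC
      have h3 : (Q.biUnion (fun x => NBF x ∩ Rs)).card
          ≤ (s.biUnion (fun p => NBF (p.1 : V) ∩ Rs)).card :=
        Finset.card_le_card (hBsup Q (Finset.filter_subset _ _))
      have h4 : (Q.card + Sf.card) * d ≤ 2 * d * Q.card := by
        have : (Q.card + Sf.card) * d ≤ (Q.card + Q.card) * d :=
          Nat.mul_le_mul_right _ (by omega)
        calc (Q.card + Sf.card) * d ≤ (Q.card + Q.card) * d := this
          _ = 2 * d * Q.card := by ring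
      calc s.card ≤ W.card * d := hs_le
        _ = (Q.card + Sf.card) * d := by rw [hsplitW]
        _ ≤ 2 * d * Q.card := h4
        _ ≤ (Q.biUnion (fun x => NBF x ∩ Rs)).card := h2
        _ ≤ _ := h3
    · have h5 := hF5 Sf hSfund
      have h3 : (Sf.biUnion (fun u => NBF u ∩ Rs)).card
          ≤ (s.biUnion (fun p => NBF (p.1 : V) ∩ Rs)).card :=
        Finset.card_le_card (hBsup Sf (Finset.filter_subset _ _))
      have hdd : d ≤ d ^ 2 := by
        rcases Nat.eq_zero_or_pos d with h | h
        · simp [h]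
        · calc d = d * 1 := by ring
            _ ≤ d * d := Nat.mul_le_mul_left _ h
            _ = d ^ 2 := by ring
      have hX2 : 2 * d * Sf.card ≤ (Sf.biUnion (fun u => NBF u ∩ Rs)).card := by
        set X := (Sf.biUnion (fun u => NBF u ∩ Rs)).card with hX
        have harith : (2 * d + 1) * (2 * d * Sf.card) + Sf.card * (2 * d)
            ≤ Sf.card * (9 * d ^ 2) := by
          have h40 : 4 * d ^ 2 + 4 * d ≤ 9 * d ^ 2 := by
            have : 4 * d ≤ 4 * d ^ 2 := Nat.mul_le_mul_left _ hdd
            omega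
          calc (2 * d + 1) * (2 * d * Sf.card) + Sf.card * (2 * d)
              = (4 * d ^ 2 + 4 * d) * Sf.card := by ring
            _ ≤ (9 * d ^ 2) * Sf.card := Nat.mul_le_mul_right _ h40
            _ = Sf.card * (9 * d ^ 2) := by ring
        have h6 : (2 * d + 1) * (2 * d * Sf.card) ≤ (2 * d + 1) * X := by omega
        exact Nat.le_of_mul_le_mul_left h6 (by omega)
      calc s.card ≤ W.card * d := hs_le
        _ = (Q.card + Sf.card) * d := by rw [hsplitW]
        _ ≤ (Sf.card + Sf.card) * d := Nat.mul_le_mul_right _ (by omega)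
        _ = 2 * d * Sf.card := by ring
        _ ≤ (Sf.biUnion (fun u => NBF u ∩ Rs)).card := hX2
        _ ≤ _ := h3
  obtain ⟨φ, hφinj, hφmem⟩ := (Finset.all_card_le_biUnion_card_iff_exists_injective
    (fun p : (↥D) × Fin d => NBF (p.1 : V) ∩ Rs)).mp hall
  -- the ownership function
  set own : V → V := fun v =>
    if hv : v ∈ D then v
    else if h : ∃ p : (↥D) × Fin d, φ p = v then ((Classical.choose h).1 : V)
    else Classical.choose (hdomD v hv) with hown_def
  have hown_self : ∀ v ∈ D, own v = v := by
    intro v hv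
    simp only [hown_def]
    rw [dif_pos hv]
  have hown_phi : ∀ p : (↥D) × Fin d, own (φ p) = ((p.1 : ↥D) : V) := by
    intro p
    have hpRs : φ p ∈ Rs := (Finset.mem_inter.mp (hφmem p)).2
    have hpD : φ p ∉ D := hRsD _ hpRs
    have hex : ∃ q : (↥D) × Fin d, φ q = φ p := ⟨p, rfl⟩
    have hchoose : Classical.choose hex = p := hφinj (Classical.choose_spec hex)
    simp only [hown_def]
    rw [dif_neg hpD, dif_pos hex, hchoose]
  have hown_mem : ∀ v, own v ∈ D := by
    intro v
    by_cases hv : v ∈ D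
    · rw [hown_self v hv]; exact hv
    · simp only [hown_def]
      rw [dif_neg hv]
      by_cases h : ∃ p : (↥D) × Fin d, φ p = v
      · rw [dif_pos h]
        exact ((Classical.choose h).1).2
      · rw [dif_neg h]
        exact Finset.mem_union_left _ (Classical.choose_spec (hdomD v hv)).1
  have hown_adj : ∀ v, v ∉ D → G.Adj (own v) v := by
    intro v hv
    simp only [hown_def]
    rw [dif_neg hv]
    by_cases h : ∃ p : (↥D) × Fin d, φ p = v
    · rw [dif_pos h]
      have hmem' := hφmem (Classical.choose h)
      have hspec := Classical.choose_spec h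
      rw [hspec] at hmem'
      exact (hNB _ _).mp (Finset.mem_inter.mp hmem').1
    · rw [dif_neg h]
      exact ((Classical.choose_spec (hdomD v hv)).2).symm
  have hcount : ∀ z ∈ D, d ≤ (Finset.univ.filter fun v => own v = z ∧ v ≠ z).card := by
    intro z hz
    have hinj2 : Function.Injective (fun k : Fin d => φ (⟨z, hz⟩, k)) := by
      intro k k' hkk
      have := hφinj hkk
      exact (Prod.ext_iff.mp this).2
    have himg : (Finset.univ : Finset (Fin d)).image (fun k => φ (⟨z, hz⟩, k))
        ⊆ Finset.univ.filter (fun v => own v = z ∧ v ≠ z) := by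
      intro v hv
      obtain ⟨k, -, rfl⟩ := Finset.mem_image.mp hv
      have hvRs : φ (⟨z, hz⟩, k) ∈ Rs := (Finset.mem_inter.mp (hφmem (⟨z, hz⟩, k))).2
      have hvD : φ (⟨z, hz⟩, k) ∉ D := hRsD _ hvRs
      refine Finset.mem_filter.mpr ⟨Finset.mem_univ _, ?_, ?_⟩
      · exact hown_phi (⟨z, hz⟩, k)
      · intro hEq
        rw [hEq] at hvD
        exact hvD hz
    calc d = ((Finset.univ : Finset (Fin d)).image (fun k => φ (⟨z, hz⟩, k))).card := by
          rw [Finset.card_image_of_injective _ hinj2, Finset.card_univ, Fintype.card_fin]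
      _ ≤ _ := Finset.card_le_card himg
  exact ⟨D, own, hown_mem, hown_self, hown_adj, hcount⟩


/-- Packaging: an ownership map with large fibers gives a star cover. -/
theorem hasStarCover_of_own [Fintype V] [DecidableEq V] (d : ℕ)
    (D : Finset V) (own : V → V)
    (hmem : ∀ v, own v ∈ D)
    (hself : ∀ v ∈ D, own v = v)
    (hadj : ∀ v, v ∉ D → G.Adj (own v) v)
    (hcount : ∀ z ∈ D, d ≤ (Finset.univ.filter fun v => own v = z ∧ v ≠ z).card) :
    HasStarCover G d := by
  classical
  set e := D.equivFin with he
  -- center of star i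
  set ctr : Fin D.card → V := fun i => (e.symm i : V) with hctr
  have hctrD : ∀ i, ctr i ∈ D := fun i => (e.symm i).2
  set Lf : Fin D.card → Finset V :=
    fun i => Finset.univ.filter fun v => own v = ctr i ∧ v ≠ ctr i with hLf
  have hLadj : ∀ i, ∀ l ∈ (↑(Lf i) : Set V), G.Adj (ctr i) l := by
    intro i l hl
    simp only [hLf, Finset.coe_filter, Set.mem_setOf_eq, Finset.mem_univ, true_and] at hl
    obtain ⟨h1, h2⟩ := hl
    have hlD : l ∉ D := by
      intro hld
      exact h2 ((hself l hld).symm.trans h1)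
    have := hadj l hlD
    rwa [h1] at this
  have hznotL : ∀ i, ctr i ∉ (↑(Lf i) : Set V) := by
    intro i hmem'
    simp only [hLf, Finset.coe_filter, Set.mem_setOf_eq] at hmem'
    exact hmem'.2.2 rfl
  refine ⟨D.card, fun i => starSub G (ctr i) (↑(Lf i)) (hLadj i), ?_, ?_, ?_, ?_⟩
  · intro i
    exact starSub_isStar (hznotL i)
  · intro i
    rw [starSub_edgeSet_ncard (hznotL i), Set.ncard_coe_finset]
    exact hcount (ctr i) (hctrD i)
  · intro i j hij
    have hctrne : ctr i ≠ ctr j := by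
      intro hEq
      exact hij (e.symm.injective (Subtype.ext hEq))
    rw [Set.disjoint_left]
    intro v hvi hvj
    -- verts = insert ctr L : membership implies own v = ctr
    have hov : ∀ k, v ∈ (starSub G (ctr k) (↑(Lf k)) (hLadj k)).verts → own v = ctr k := by
      intro k hv
      rcases hv with h | h
      · rw [h]; exact hself _ (hctrD k)
      · simp only [hLf, Finset.coe_filter, Set.mem_setOf_eq] at h
        exact h.2.1
    exact hctrne ((hov i hvi).symm.trans (hov j hvj))
  · intro v
    refine ⟨e ⟨own v, hmem v⟩, ?_⟩
    have : ctr (e ⟨own v, hmem v⟩) = own v := by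
      simp [hctr]
    by_cases hv : v = own v
    · left; rw [this, ← hv]
    · right
      simp only [hLf, Finset.coe_filter, Set.mem_setOf_eq, Finset.mem_univ, true_and]
      rw [this]
      exact ⟨rfl, fun h => hv h⟩


end StarCoverAux

/-- There is a positive constant `c` such that for every natural number `d`, every finite
simple graph of minimum degree at least `c * d ^ 2` has a star-cover in which every star
has size at least `d`. -/
theorem stmt_3 :
    ∃ c : ℝ, 0 < c ∧ ∀ (d : ℕ) (V : Type) [Fintype V] (G : SimpleGraph V),
      (∀ v, c * (d : ℝ) ^ 2 ≤ (gdeg G v : ℝ)) → HasStarCover G d := by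
  refine ⟨9, by norm_num, ?_⟩
  intro d V _ G hdeg
  classical
  have hdeg' : ∀ v, 9 * d ^ 2 ≤ Nat.card (G.neighborSet v) := by
    intro v
    have h := hdeg v
    have h2 : ((9 * d ^ 2 : ℕ) : ℝ) ≤ (gdeg G v : ℝ) := by
      push_cast
      linarith
    have h3 : (9 * d ^ 2 : ℕ) ≤ gdeg G v := by exact_mod_cast h2
    simpa [gdeg] using h3
  obtain ⟨D, own, h1, h2, h3, h4⟩ := StarCoverAux.main_own G d hdeg'
  exact StarCoverAux.hasStarCover_of_own d D own h1 h2 h3 h4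
end

section
/- For all natural numbers k ≥ 1 and d, there exists a finite simple connected graph G of minimum degree at least d such that every spanning tree of G contains, for every i ∈ {1, …, k}, a vertex of degree exactly i in the tree. -/
open SimpleGraph

lemma gdeg_eq_degree {V : Type} [Fintype V] (H : SimpleGraph V) [DecidableRel H.Adj] (v : V) :
    gdeg H v = H.degree v := by
  rw [gdeg, Nat.card_eq_fintype_card, card_neighborSet_eq_degree]

/-- Every tree on at least two vertices has a leaf. -/
lemma exists_leaf {V : Type} [Fintype V] {T : SimpleGraph V} (hT : T.IsTree)
    (h2 : 2 ≤ Fintype.card V) : ∃ v, gdeg T v = 1 := by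
  classical
  by_contra hcon
  push_neg at hcon
  have hdeg : ∀ v, 2 ≤ T.degree v := by
    intro v
    have h1 : 0 < T.degree v := by
      rw [T.degree_pos_iff_exists_adj v]
      obtain ⟨u, hu⟩ := Fintype.exists_ne_of_one_lt_card h2 v
      obtain ⟨p⟩ := hT.isConnected.preconnected v u
      cases p with
      | nil => exact absurd rfl hu
      | cons h q => exact ⟨_, h⟩
    have h2' := hcon v
    rw [gdeg_eq_degree] at h2'
    omega
  have hsum : ∑ v, T.degree v = 2 * T.edgeFinset.card := T.sum_degrees_eq_twice_card_edges
  have hcard := hT.card_edgeFinset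
  have hge : 2 * Fintype.card V ≤ ∑ v, T.degree v := by
    calc 2 * Fintype.card V = ∑ _v : V, 2 := by
          simp [Finset.sum_const, mul_comm]
      _ ≤ ∑ v, T.degree v := Finset.sum_le_sum (fun v _ => hdeg v)
  omega

/-- Attach to every vertex of `G` a private clique of size `d+1` by a single bridge. -/
def blow {V : Type} (G : SimpleGraph V) (d : ℕ) : SimpleGraph (V ⊕ V × Fin (d + 1)) where
  Adj x y :=
    match x, y with
    | Sum.inl u, Sum.inl v => G.Adj u v
    | Sum.inl u, Sum.inr (v, b) => u = v ∧ b = 0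
    | Sum.inr (v, b), Sum.inl u => u = v ∧ b = 0
    | Sum.inr (u, a), Sum.inr (v, b) => u = v ∧ a ≠ b
  symm := by
    constructor
    rintro (u | ⟨u, a⟩) (v | ⟨v, b⟩) h
    · exact h.symm
    · exact h
    · exact h
    · exact ⟨h.1.symm, h.2.symm⟩
  loopless := by
    constructor
    rintro (u | ⟨u, a⟩) h
    · exact G.irrefl h
    · exact h.2 rfl

lemma blow_reach_proj {V : Type} {G : SimpleGraph V} {d : ℕ}
    {T' : SimpleGraph (V ⊕ V × Fin (d + 1))} (hle : T' ≤ blow G d)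
    (T : SimpleGraph V)
    (hTdef : ∀ u v, T.Adj u v ↔ T'.Adj (Sum.inl u) (Sum.inl v)) :
    ∀ {x y}, T'.Walk x y →
      T.Reachable (Sum.elim id Prod.fst x) (Sum.elim id Prod.fst y) := by
  intro x y p
  induction p with
  | nil => exact Reachable.refl _
  | @cons a b c h p ih =>
    have hb := hle h
    have step : T.Reachable (Sum.elim id Prod.fst a) (Sum.elim id Prod.fst b) := by
      match a, b, hb with
      | Sum.inl u, Sum.inl v, hb =>
        exact ((hTdef u v).2 h).reachable
      | Sum.inl u, Sum.inr (v, bb), hb =>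
        obtain ⟨rfl, -⟩ := hb
        exact Reachable.refl _
      | Sum.inr (v, bb), Sum.inl u, hb =>
        obtain ⟨rfl, -⟩ := hb
        exact Reachable.refl _
      | Sum.inr (u, aa), Sum.inr (v, bb), hb =>
        obtain ⟨rfl, -⟩ := hb
        exact Reachable.refl _
    exact step.trans ih

lemma blow_bridge_aux {V : Type} {G : SimpleGraph V} {d : ℕ}
    {T' : SimpleGraph (V ⊕ V × Fin (d + 1))} (hle : T' ≤ blow G d) :
    ∀ {x y}, T'.Walk x y → ∀ (v : V) (b : Fin (d + 1)) (w : V),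
      x = Sum.inr (v, b) → y = Sum.inl w →
      ∃ b', T'.Adj (Sum.inr (v, b')) (Sum.inl v) := by
  intro x y p
  induction p with
  | nil =>
    rintro v b w rfl h
    exact absurd h (by simp)
  | @cons a c y h p ih =>
    rintro v b w rfl rfl
    match c, hle h with
    | Sum.inl u, hb =>
      obtain ⟨rfl, rfl⟩ := hb
      exact ⟨_, h⟩
    | Sum.inr (u, bb), hb =>
      obtain ⟨rfl, -⟩ := hb
      exact ih v bb w rfl rfl

lemma blow_bridge {V : Type} {G : SimpleGraph V} {d : ℕ}
    {T' : SimpleGraph (V ⊕ V × Fin (d + 1))} (hle : T' ≤ blow G d)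
    (hT' : T'.IsTree) (v : V) :
    T'.Adj (Sum.inl v) (Sum.inr (v, 0)) := by
  obtain ⟨p⟩ := hT'.isConnected.preconnected (Sum.inr (v, 0)) (Sum.inl v)
  obtain ⟨b', hb'⟩ := blow_bridge_aux hle p v 0 v rfl rfl
  have := hle hb'
  obtain ⟨-, rfl⟩ := this
  exact hb'.symm

/-- Restriction of a spanning tree of `blow G d` to `V`. -/
lemma blow_restrict {V : Type} [Fintype V] {G : SimpleGraph V} {d : ℕ}
    (hG : G.Connected)
    {T' : SimpleGraph (V ⊕ V × Fin (d + 1))} (hle : T' ≤ blow G d) (hT' : T'.IsTree) :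
    ∃ T : SimpleGraph V, T ≤ G ∧ T.IsTree ∧
      ∀ v, gdeg T' (Sum.inl v) = gdeg T v + 1 := by
  classical
  set T : SimpleGraph V :=
    { Adj := fun u v => T'.Adj (Sum.inl u) (Sum.inl v)
      symm := ⟨fun u v h => T'.adj_symm h⟩
      loopless := ⟨fun u h => T'.irrefl h⟩ } with hTdef
  have hTadj : ∀ u v, T.Adj u v ↔ T'.Adj (Sum.inl u) (Sum.inl v) := fun _ _ => Iff.rfl
  refine ⟨T, ?_, ⟨?_, ?_⟩, ?_⟩
  · intro u v h
    exact hle h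
  · -- connected
    have : Nonempty V := hG.nonempty
    refine ⟨fun u v => ?_⟩
    obtain ⟨p⟩ := hT'.isConnected.preconnected (Sum.inl u) (Sum.inl v)
    exact blow_reach_proj hle T hTadj p
  · -- acyclic
    intro v c hc
    exact hT'.IsAcyclic (c.map ⟨Sum.inl, fun h => h⟩)
      (hc.map (f := ⟨Sum.inl, fun h => h⟩) (by exact Sum.inl_injective))
  · intro v
    have hnbr : T'.neighborSet (Sum.inl v) =
        Sum.inl '' (T.neighborSet v) ∪ {Sum.inr (v, 0)} := by
      ext x
      constructor
      · intro hx
        match x, hle hx with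
        | Sum.inl u, hb =>
          exact Or.inl ⟨u, hx, rfl⟩
        | Sum.inr (u, b), hb =>
          obtain ⟨rfl, rfl⟩ := hb
          exact Or.inr rfl
      · rintro (⟨u, hu, rfl⟩ | rfl)
        · exact hu
        · exact blow_bridge hle hT' v
    rw [gdeg, gdeg, Nat.card_coe_set_eq, Nat.card_coe_set_eq, hnbr,
      Set.ncard_union_eq ?_ (Set.toFinite _) (Set.toFinite _),
      Set.ncard_image_of_injective _ Sum.inl_injective, Set.ncard_singleton]
    · rw [Set.disjoint_singleton_right]
      rintro ⟨u, -, h⟩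
      exact absurd h (by simp)

lemma blow_connected {V : Type} {G : SimpleGraph V} {d : ℕ} (hG : G.Connected) :
    (blow G d).Connected := by
  have : Nonempty V := hG.nonempty
  have reach_inl : ∀ (x : V ⊕ V × Fin (d + 1)),
      (blow G d).Reachable x (Sum.inl (Sum.elim id Prod.fst x)) := by
    rintro (u | ⟨v, b⟩)
    · exact Reachable.refl _
    · by_cases hb : b = 0
      · subst hb
        exact (Adj.reachable (by exact ⟨rfl, rfl⟩))
      · refine Reachable.trans (Adj.reachable (v := Sum.inr (v, 0)) ?_) (Adj.reachable ?_)
        · exact ⟨rfl, hb⟩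
        · exact ⟨rfl, rfl⟩
  refine ⟨fun x y => ?_⟩
  refine (reach_inl x).trans (Reachable.trans ?_ (reach_inl y).symm)
  exact Reachable.map (⟨Sum.inl, fun h => h⟩ : G →g blow G d)
    (hG.preconnected (Sum.elim id Prod.fst x) (Sum.elim id Prod.fst y))

lemma blow_mindeg {V : Type} [Fintype V] {G : SimpleGraph V} {d : ℕ}
    (hdeg : ∀ v, d ≤ gdeg G v) :
    ∀ x, d ≤ gdeg (blow G d) x := by
  classical
  rintro (u | ⟨v, b⟩)
  · refine le_trans (hdeg u) ?_
    have hsub : Sum.inl '' (G.neighborSet u) ⊆ (blow G d).neighborSet (Sum.inl u) := by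
      rintro x ⟨w, hw, rfl⟩
      exact hw
    calc gdeg G u = (Sum.inl '' (G.neighborSet u)).ncard := by
          rw [gdeg, Nat.card_coe_set_eq, Set.ncard_image_of_injective _ Sum.inl_injective]
      _ ≤ ((blow G d).neighborSet (Sum.inl u)).ncard := Set.ncard_le_ncard hsub (Set.toFinite _)
      _ = gdeg (blow G d) (Sum.inl u) := by rw [gdeg, Nat.card_coe_set_eq]
  · have hsub : (fun b' => (Sum.inr (v, b') : V ⊕ V × Fin (d + 1))) ''
        (({b}ᶜ : Finset (Fin (d + 1))) : Set (Fin (d + 1)))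
        ⊆ (blow G d).neighborSet (Sum.inr (v, b)) := by
      rintro x ⟨b', hb', rfl⟩
      simp only [Finset.coe_compl, Finset.coe_singleton, Set.mem_compl_iff,
        Set.mem_singleton_iff] at hb'
      exact ⟨rfl, fun h => hb' h.symm⟩
    have hinj : Function.Injective (fun b' => (Sum.inr (v, b') : V ⊕ V × Fin (d + 1))) := by
      intro a b h
      simpa using h
    calc d = (({b}ᶜ : Finset (Fin (d + 1))) : Set (Fin (d + 1))).ncard := by
          rw [Set.ncard_coe_finset, Finset.card_compl, Finset.card_singleton, Fintype.card_fin]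
          omega
      _ = ((fun b' => (Sum.inr (v, b') : V ⊕ V × Fin (d + 1))) ''
            (({b}ᶜ : Finset (Fin (d + 1))) : Set (Fin (d + 1)))).ncard := by
          rw [Set.ncard_image_of_injective _ hinj]
      _ ≤ ((blow G d).neighborSet (Sum.inr (v, b))).ncard :=
          Set.ncard_le_ncard hsub (Set.toFinite _)
      _ = gdeg (blow G d) (Sum.inr (v, b)) := by rw [gdeg, Nat.card_coe_set_eq]

lemma gdeg_top (n : ℕ) (v : Fin (n + 2)) : gdeg (⊤ : SimpleGraph (Fin (n + 2))) v = n + 1 := by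
  classical
  rw [gdeg_eq_degree]
  simp

/-- For all natural numbers `k ≥ 1` and `d`, there exists a finite simple connected graph `G`
of minimum degree at least `d` such that every spanning tree of `G` contains, for every
`i ∈ {1, …, k}`, a vertex of degree exactly `i` in the tree. -/
theorem stmt_4 (k d : ℕ) (hk : 1 ≤ k) :
    ∃ (V : Type) (_ : Fintype V) (G : SimpleGraph V),
      G.Connected ∧ (∀ v, d ≤ gdeg G v) ∧
      ∀ T : SimpleGraph V, T ≤ G → T.IsTree →
        ∀ i, 1 ≤ i → i ≤ k → ∃ v, gdeg T v = i := by
  induction k, hk using Nat.le_induction with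
  | base =>
    refine ⟨Fin (d + 2), inferInstance, ⊤, ?_, ?_, ?_⟩
    · exact connected_top
    · intro v; rw [gdeg_top]; omega
    · intro T hle hT i hi1 hi2
      have : i = 1 := le_antisymm hi2 hi1
      subst this
      exact exists_leaf hT (by simp)
  | succ k hk ih =>
    obtain ⟨V, fV, G, hconn, hdeg, htree⟩ := ih
    letI := fV
    refine ⟨V ⊕ V × Fin (d + 1), inferInstance, blow G d, blow_connected hconn,
      blow_mindeg hdeg, ?_⟩
    intro T' hle hT' i hi1 hi2
    rcases Nat.eq_or_lt_of_le hi1 with h1 | h1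
    · -- i = 1 : a leaf of T'
      subst h1
      refine exists_leaf hT' ?_
      haveI : Nonempty V := hconn.nonempty
      rw [Fintype.card_sum]
      have : 0 < Fintype.card V := Fintype.card_pos
      have : 0 < Fintype.card (V × Fin (d + 1)) := by
        rw [Fintype.card_prod, Fintype.card_fin]
        positivity
      omega
    · -- i ≥ 2 : use restriction
      obtain ⟨T, hTle, hTtree, hTdeg⟩ := blow_restrict hconn hle hT'
      obtain ⟨v, hv⟩ := htree T hTle hTtree (i - 1) (by omega) (by omega)
      exact ⟨Sum.inl v, by rw [hTdeg, hv]; omega⟩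
end

section
/- Let G be a finite simple connected triangle-free graph of minimum degree at least 3 with a star-cover {S_1, …, S_m} in which every star has size at least 6. Let T be a tree in G of maximal size (number of edges) subject to: (1) T contains no two adjacent vertices of degree 2 in T; (2) the vertex set of G − V(T) is the union of the vertex sets of the stars S_i for i in some subset I of {1, …, m}; and (3) whenever a leaf v of T is joined in G to a vertex of G − V(T), the neighbour of v in T has degree at least 5 in T. If some vertex v of T has a neighbour u in G with u ∉ V(T), then v has degree 1 in T and u has degree 1 in the graph G − V(T). -/
open SimpleGraph

lemma subdeg_eq {V : Type} {G : SimpleGraph V} (H : G.Subgraph) (v : V) :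
    subdeg H v = (H.neighborSet v).ncard := Nat.card_coe_set_eq _

lemma walk_closed {α : Type*} {X : SimpleGraph α} {s : Set α}
    (hs : ∀ ⦃x y⦄, X.Adj x y → x ∈ s → y ∈ s) {x y : α} (p : X.Walk x y)
    (hx : x ∈ s) : y ∈ s := by
  induction p with
  | nil => exact hx
  | cons h _ ih => exact ih (hs h hx)

lemma acyclic_anti {V : Type*} {A B : SimpleGraph V} (hle : A ≤ B) (hB : B.IsAcyclic) :
    A.IsAcyclic := by
  intro v c hc
  exact hB (c.mapLe hle) (hc.mapLe _)

lemma first_edge_mem {V : Type*} {B : SimpleGraph V} {x y : V} (w : B.Walk x y)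
    (hxy : x ≠ y) {z : V} (h : ∀ y', B.Adj x y' → y' = z) : s(x, z) ∈ w.edges := by
  cases w with
  | nil => exact absurd rfl hxy
  | cons hadj t =>
    have := h _ hadj
    subst this
    simp [Walk.edges_cons]

lemma pendant_acyclic {V : Type*} {A : SimpleGraph V} (hA : A.IsAcyclic) {p q : V}
    (hq : q ∉ A.support) : (A ⊔ SimpleGraph.fromEdgeSet {s(p, q)}).IsAcyclic := by
  classical
  set B := A ⊔ SimpleGraph.fromEdgeSet {s(p, q)} with hB
  have hnb : ∀ y, B.Adj q y → y = p := by
    intro y hy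
    rcases hy with hy | hy
    · exact absurd ⟨y, hy⟩ hq
    · rw [fromEdgeSet_adj] at hy
      obtain ⟨he, hne⟩ := hy
      simp only [Set.mem_singleton_iff, Sym2.eq, Sym2.rel_iff', Prod.mk.injEq,
        Prod.swap_prod_mk] at he
      rcases he with ⟨h1, h2⟩ | ⟨-, h2⟩
      · rw [h2, h1]
      · exact h2
  have key : ∀ (d : B.Walk q q), d.IsCycle → False := by
    intro d hd
    cases d with
    | nil => exact hd.ne_nil rfl
    | cons h t =>
      rename_i w
      have hz : p = w := (hnb _ h).symm
      subst hz
      have hne : q ≠ p := h.ne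
      have hmem : s(q, p) ∈ t.reverse.edges :=
        first_edge_mem t.reverse hne hnb
      rw [Walk.edges_reverse, List.mem_reverse] at hmem
      have htrail := hd.isTrail.edges_nodup
      rw [Walk.edges_cons] at htrail
      exact (List.nodup_cons.mp htrail).1 hmem
  intro v c hc
  by_cases he : s(p, q) ∈ c.edges
  · have hqs : q ∈ c.support := Walk.snd_mem_support_of_mem_edges c he
    exact key (c.rotate q hqs) (hc.rotate hqs)
  · have hAe : ∀ e ∈ c.edges, e ∈ A.edgeSet := by
      intro e hec
      have hBe : e ∈ B.edgeSet := c.edges_subset_edgeSet hec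
      rw [hB, edgeSet_sup] at hBe
      rcases hBe with h' | h'
      · exact h'
      · rw [edgeSet_fromEdgeSet] at h'
        obtain ⟨h1, -⟩ := h'
        rw [Set.mem_singleton_iff] at h1
        subst h1
        exact absurd hec he
    exact hA (c.transfer A hAe) (hc.transfer _)

lemma fan_acyclic {V : Type*} {B : SimpleGraph V} (hB : B.IsAcyclic) (c : V) (M : Set V)
    (hMfin : M.Finite) (hM : ∀ ℓ ∈ M, ℓ ∉ B.support ∧ ℓ ≠ c) :
    (B ⊔ SimpleGraph.fromEdgeSet ((fun ℓ => s(c, ℓ)) '' M)).IsAcyclic := by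
  classical
  revert hM
  refine Set.Finite.induction_on
    (motive := fun M _ => (∀ ℓ ∈ M, ℓ ∉ B.support ∧ ℓ ≠ c) →
      (B ⊔ SimpleGraph.fromEdgeSet ((fun ℓ => s(c, ℓ)) '' M)).IsAcyclic)
    M hMfin ?_ ?_
  · intro _
    have : (fun ℓ => s(c, ℓ)) '' (∅ : Set V) = ∅ := Set.image_empty _
    rw [this, fromEdgeSet_empty, sup_bot_eq]
    exact hB
  · intro ℓ₀ M hℓ₀ hMf ih hM
    have hM' : ∀ ℓ ∈ M, ℓ ∉ B.support ∧ ℓ ≠ c := fun ℓ hℓ => hM ℓ (Set.mem_insert_of_mem _ hℓ)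
    have heq : B ⊔ SimpleGraph.fromEdgeSet ((fun ℓ => s(c, ℓ)) '' insert ℓ₀ M)
        = (B ⊔ SimpleGraph.fromEdgeSet ((fun ℓ => s(c, ℓ)) '' M))
          ⊔ SimpleGraph.fromEdgeSet {s(c, ℓ₀)} := by
      ext x y
      simp only [sup_adj, fromEdgeSet_adj, Set.mem_image, Set.mem_insert_iff,
        Set.mem_singleton_iff]
      constructor
      · rintro (h | ⟨⟨ℓ, (rfl | hℓ), hs⟩, hne⟩)
        · exact Or.inl (Or.inl h)
        · exact Or.inr ⟨hs.symm, hne⟩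
        · exact Or.inl (Or.inr ⟨⟨ℓ, hℓ, hs⟩, hne⟩)
      · rintro ((h | ⟨⟨ℓ, hℓ, hs⟩, hne⟩) | ⟨hs, hne⟩)
        · exact Or.inl h
        · exact Or.inr ⟨⟨ℓ, Or.inr hℓ, hs⟩, hne⟩
        · exact Or.inr ⟨⟨ℓ₀, Or.inl rfl, hs.symm⟩, hne⟩
    rw [heq]
    apply pendant_acyclic (ih hM')
    intro hsup
    obtain ⟨y, hy⟩ := hsup
    rcases hy with hy | hy
    · exact (hM ℓ₀ (Set.mem_insert _ _)).1 ⟨y, hy⟩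
    · rw [fromEdgeSet_adj] at hy
      obtain ⟨⟨ℓ, hℓ, hs⟩, hne⟩ := hy
      simp only [Sym2.eq, Sym2.rel_iff', Prod.mk.injEq, Prod.swap_prod_mk] at hs
      rcases hs with ⟨h1, h2⟩ | ⟨h1, h2⟩
      · exact (hM ℓ₀ (Set.mem_insert _ _)).2 h1.symm
      · exact hℓ₀ (h2 ▸ hℓ)

lemma lift_walk {V : Type} {G : SimpleGraph V} (H : G.Subgraph) :
    ∀ {x y : V} (p : G.Walk x y) (_ : ∀ e ∈ p.edges, e ∈ H.edgeSet)
      (hx : x ∈ H.verts) (hy : y ∈ H.verts),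
      ∃ q : H.coe.Walk ⟨x, hx⟩ ⟨y, hy⟩, q.map H.hom = p := by
  intro x y p
  induction p with
  | nil => exact fun _ hx hy => ⟨Walk.nil, rfl⟩
  | @cons x b y h p ih =>
    intro hp hx hy
    have hadj : H.Adj x b := by
      have := hp s(x, b) (by simp)
      rwa [Subgraph.mem_edgeSet] at this
    have hb : b ∈ H.verts := hadj.snd_mem
    obtain ⟨q, hq⟩ := ih (fun e he => hp e (by simp [he])) hb hy
    refine ⟨Walk.cons (by exact hadj) q, ?_⟩
    subst hq
    rfl

lemma spanningCoe_acyclic_of_coe {V : Type} {G : SimpleGraph V} (H : G.Subgraph)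
    (h : H.coe.IsAcyclic) : H.spanningCoe.IsAcyclic := by
  intro v c hc
  have hc' : (c.mapLe H.spanningCoe_le).IsCycle := hc.mapLe _
  have hv : v ∈ H.verts := by
    cases c with
    | nil => exact absurd rfl hc.ne_nil
    | cons hadj t => exact (hadj : H.Adj v _).fst_mem
  have hedges : ∀ e ∈ (c.mapLe H.spanningCoe_le).edges, e ∈ H.edgeSet := by
    intro e he
    have : (c.mapLe H.spanningCoe_le).edges = c.edges := by
      simp only [Walk.mapLe, Walk.edges_map]
      have : (Sym2.map ⇑(SimpleGraph.Hom.ofLE H.spanningCoe_le)) = id := by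
        funext e
        induction e with
        | h a b => rfl
      rw [this, List.map_id]
    rw [this] at he
    have := c.edges_subset_edgeSet he
    induction e with
    | h a b =>
      rw [SimpleGraph.mem_edgeSet] at this
      rwa [Subgraph.mem_edgeSet]
  obtain ⟨q, hq⟩ := lift_walk H (c.mapLe H.spanningCoe_le) hedges hv hv
  have hqc : q.IsCycle := by
    rw [← Walk.map_isCycle_iff_of_injective (f := H.hom) (Subgraph.hom_injective)]
    rw [hq]
    exact hc'
  exact h _ hqc

lemma coe_acyclic_of_spanningCoe {V : Type} {G : SimpleGraph V} (H : G.Subgraph)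
    (h : H.spanningCoe.IsAcyclic) : H.coe.IsAcyclic := by
  intro v c hc
  let f : H.coe →g H.spanningCoe := ⟨Subtype.val, fun hadj => hadj⟩
  exact h _ ((Walk.map_isCycle_iff_of_injective (f := f) (by exact Subtype.val_injective)).mpr hc)

lemma two_mem_one_lt_ncard {α : Type*} {s : Set α} (hfin : s.Finite) {x y : α}
    (hx : x ∈ s) (hy : y ∈ s) (hne : x ≠ y) : 1 < s.ncard :=
  (Set.one_lt_ncard_iff hfin).mpr ⟨x, y, hx, hy, hne⟩

lemma verts_card {V : Type} [Fintype V] {G : SimpleGraph V} (H : G.Subgraph)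
    (h : H.coe.IsTree) : H.verts.ncard = H.edgeSet.ncard + 1 := by
  classical
  haveI : Fintype ↥H.verts := Fintype.ofFinite _
  haveI : Fintype ↥H.coe.edgeSet := Fintype.ofFinite _
  have hcard := h.card_edgeFinset
  have h1 : H.verts.ncard = Fintype.card ↥H.verts := by
    rw [← Nat.card_coe_set_eq, Nat.card_eq_fintype_card]
  have h2 : H.coe.edgeFinset.card = H.edgeSet.ncard := by
    rw [SimpleGraph.edgeFinset_card]
    rw [← H.image_coe_edgeSet_coe]
    rw [Set.ncard_image_of_injective _ (Sym2.map.injective Subtype.val_injective)]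
    rw [← Nat.card_coe_set_eq, Nat.card_eq_fintype_card]
  rw [h1, ← hcard, h2]

lemma nonempty_diff_of_ncard_lt {α : Type*} {s t : Set α} (h : t.ncard < s.ncard)
    (ht : t.Finite) : (s \ t).Nonempty := by
  rw [Set.nonempty_iff_ne_empty]
  intro he
  rw [Set.diff_eq_empty] at he
  exact absurd (Set.ncard_le_ncard he ht) (by omega)

lemma exists_adj_of_walk {α : Type*} {X : SimpleGraph α} {a b : α} (w : X.Walk a b)
    (hne : a ≠ b) : ∃ y, X.Adj a y := by
  cases w with
  | nil => exact absurd rfl hne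
  | cons h _ => exact ⟨_, h⟩

lemma path_cases {α : Type*} {X : SimpleGraph α} {a b : α} (w : X.Walk a b) (hp : w.IsPath)
    (hne : a ≠ b) : X.Adj a b ∨ ∃ y z, X.Adj a y ∧ X.Adj y z ∧ z ≠ a ∧ y ≠ b := by
  cases w with
  | nil => exact absurd rfl hne
  | cons h t =>
    rename_i y
    cases t with
    | nil => exact Or.inl h
    | cons h2 t2 =>
      rename_i z
      have hnd := hp.support_nodup
      rw [Walk.support_cons, Walk.support_cons, List.nodup_cons] at hnd
      refine Or.inr ⟨y, z, h, h2, ?_, ?_⟩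
      · intro hza
        apply hnd.1
        rw [← hza]
        exact List.mem_cons_of_mem _ t2.start_mem_support
      · intro hyb
        have := hnd.2
        rw [List.nodup_cons] at this
        apply this.1
        rw [hyb]
        exact t2.end_mem_support

lemma star_structure {V : Type} [Fintype V] {G : SimpleGraph V} {H : G.Subgraph}
    (hs : IsStar H) (hsize : 6 ≤ H.edgeSet.ncard) :
    ∃ c ∈ H.verts, (∀ v ∈ H.verts, v ≠ c → H.Adj c v) ∧ 7 ≤ H.verts.ncard := by
  classical
  have hn : 7 ≤ H.verts.ncard := by
    rw [verts_card H hs.1]; omega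
  have hconn := hs.1.isConnected
  have hsub := hs.2
  have hDne : ({v ∈ H.verts | 1 < subdeg H v}).Nonempty := by
    by_contra hDe
    rw [Set.not_nonempty_iff_eq_empty] at hDe
    have hdeg : ∀ v ∈ H.verts, ¬(1 < subdeg H v) := by
      intro v hv hlt
      have hmem : v ∈ {v ∈ H.verts | 1 < subdeg H v} := ⟨hv, hlt⟩
      rw [hDe] at hmem
      exact hmem
    obtain ⟨v1, hv1⟩ : H.verts.Nonempty := by
      apply Set.nonempty_of_ncard_ne_zero; omega
    obtain ⟨v2, hv2⟩ : (H.verts \ {v1}).Nonempty := by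
      apply nonempty_diff_of_ncard_lt ?_ (Set.toFinite _)
      rw [Set.ncard_singleton]; omega
    obtain ⟨v3, hv3⟩ : (H.verts \ {v1, v2}).Nonempty := by
      apply nonempty_diff_of_ncard_lt ?_ (Set.toFinite _)
      have h2 : ({v1, v2} : Set V).ncard ≤ 2 := by
        refine le_trans (Set.ncard_insert_le _ _) ?_
        rw [Set.ncard_singleton]
      omega
    obtain ⟨hv2v, hv2ne⟩ := hv2
    obtain ⟨hv3v, hv3ne⟩ := hv3
    rw [Set.mem_singleton_iff] at hv2ne
    rw [Set.mem_insert_iff] at hv3ne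
    push_neg at hv3ne
    obtain ⟨hw⟩ := hconn ⟨v1, hv1⟩ ⟨v2, hv2v⟩
    obtain ⟨y, hy⟩ := exists_adj_of_walk hw (by
      intro hh
      exact hv2ne (congrArg Subtype.val hh).symm)
    have hadj1 : H.Adj v1 ↑y := hy
    have hub : ∀ w z, w ∈ H.verts → H.Adj w z → ∀ z', H.Adj w z' → z' = z := by
      intro w z hw' hz z' hz'
      by_contra hne
      exact hdeg w hw' (by
        rw [subdeg_eq]
        exact two_mem_one_lt_ncard (Set.toFinite _) hz' hz hne)
    have hclose : ∀ (x y' : ↥H.verts), H.coe.Adj x y' →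
        (↑x = v1 ∨ (x : V) = ↑y) → (↑y' = v1 ∨ (y' : V) = ↑y) := by
      rintro x y' hxy (hx | hx)
      · right
        have hh : H.Adj v1 ↑y' := by rw [← hx]; exact hxy
        exact hub v1 ↑y hv1 hadj1 _ hh
      · left
        have hh : H.Adj ↑y ↑y' := by rw [← hx]; exact hxy
        exact hub ↑y v1 hadj1.snd_mem hadj1.symm _ hh
    have hv2in : (v2 = v1 ∨ v2 = ↑y) := by
      obtain ⟨w2⟩ := hconn ⟨v1, hv1⟩ ⟨v2, hv2v⟩
      exact walk_closed (s := {x : ↥H.verts | ↑x = v1 ∨ (x : V) = ↑y}) hclose w2 (Or.inl rfl)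
    have hv3in : (v3 = v1 ∨ v3 = ↑y) := by
      obtain ⟨w3⟩ := hconn ⟨v1, hv1⟩ ⟨v3, hv3v⟩
      exact walk_closed (s := {x : ↥H.verts | ↑x = v1 ∨ (x : V) = ↑y}) hclose w3 (Or.inl rfl)
    rcases hv2in with h2 | h2
    · exact hv2ne h2
    rcases hv3in with h3 | h3
    · exact hv3ne.1 h3
    exact hv3ne.2 (h3.trans h2.symm)
  obtain ⟨c, hcv, hcd⟩ := hDne
  refine ⟨c, hcv, ?_, hn⟩
  intro v hv hvc
  obtain ⟨w⟩ := hconn ⟨v, hv⟩ ⟨c, hcv⟩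
  obtain ⟨w', hw'⟩ := w.toPath
  have hne : (⟨v, hv⟩ : ↥H.verts) ≠ ⟨c, hcv⟩ := by
    intro hh
    exact hvc (congrArg Subtype.val hh)
  rcases path_cases w' hw' hne with hvc' | ⟨y, z, h1, h2, hza, hyb⟩
  · exact (hvc' : H.Adj v c).symm
  · exfalso
    have hadj : H.Adj v ↑y := h1
    have hadj2 : H.Adj ↑y ↑z := h2
    have hym : (y : V) ∈ {v ∈ H.verts | 1 < subdeg H v} := by
      refine ⟨hadj.snd_mem, ?_⟩
      rw [subdeg_eq]
      refine two_mem_one_lt_ncard (Set.toFinite _) hadj.symm hadj2 ?_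
      intro hh
      exact hza (Subtype.ext hh.symm)
    exact hyb (Subtype.ext (hsub hym ⟨hcv, hcd⟩))

section Attach

variable {V : Type} {G : SimpleGraph V}

def attach (R : G.Subgraph) (p q c : V) (W : Set V)
    (hpR : p ∈ R.verts) (hq : q ∈ W) (hcW : c ∈ W)
    (hdisj : ∀ w ∈ W, w ∉ R.verts) (hpq : G.Adj p q)
    (hfan : ∀ ℓ ∈ W, ℓ ≠ c → G.Adj c ℓ) : G.Subgraph where
  verts := R.verts ∪ W
  Adj x y := R.Adj x y ∨ (x = p ∧ y = q) ∨ (x = q ∧ y = p) ∨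
    (x = c ∧ y ∈ W ∧ y ≠ c) ∨ (y = c ∧ x ∈ W ∧ x ≠ c)
  adj_sub := by
    rintro x y (h | ⟨rfl, rfl⟩ | ⟨rfl, rfl⟩ | ⟨rfl, hy, hyc⟩ | ⟨rfl, hx, hxc⟩)
    · exact R.adj_sub h
    · exact hpq
    · exact hpq.symm
    · exact hfan _ hy hyc
    · exact (hfan _ hx hxc).symm
  edge_vert := by
    rintro x y (h | ⟨rfl, rfl⟩ | ⟨rfl, rfl⟩ | ⟨rfl, hy, hyc⟩ | ⟨hyc, hx, hxc⟩)
    · exact Or.inl h.fst_mem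
    · exact Or.inl hpR
    · exact Or.inr hq
    · exact Or.inr hcW
    · exact Or.inr hx
  symm := by
    constructor
    rintro x y (h | ⟨rfl, rfl⟩ | ⟨rfl, rfl⟩ | ⟨rfl, hy, hyc⟩ | ⟨hyc, hx, hxc⟩)
    · exact Or.inl h.symm
    · exact Or.inr (Or.inr (Or.inl ⟨rfl, rfl⟩))
    · exact Or.inr (Or.inl ⟨rfl, rfl⟩)
    · exact Or.inr (Or.inr (Or.inr (Or.inr ⟨rfl, hy, hyc⟩)))
    · subst hyc
      exact Or.inr (Or.inr (Or.inr (Or.inl ⟨rfl, hx, hxc⟩)))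

variable [Fintype V] (R : G.Subgraph) (p q c : V) (W : Set V)
    (hpR : p ∈ R.verts) (hq : q ∈ W) (hcW : c ∈ W)
    (hdisj : ∀ w ∈ W, w ∉ R.verts) (hpq : G.Adj p q)
    (hfan : ∀ ℓ ∈ W, ℓ ≠ c → G.Adj c ℓ)

local notation "A" => attach R p q c W hpR hq hcW hdisj hpq hfan

lemma attach_verts : (A).verts = R.verts ∪ W := rfl

lemma attach_adj {x y : V} : (A).Adj x y ↔ (R.Adj x y ∨ (x = p ∧ y = q) ∨ (x = q ∧ y = p) ∨
    (x = c ∧ y ∈ W ∧ y ≠ c) ∨ (y = c ∧ x ∈ W ∧ x ≠ c)) := Iff.rfl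

lemma attach_le : R ≤ A := by
  constructor
  · exact Set.subset_union_left
  · intro v w h
    exact Or.inl h

lemma attach_adj_in_base {x y : V} (h : (A).Adj x y) (hx : x ∈ R.verts) (hy : y ∈ R.verts) :
    R.Adj x y := by
  rcases h with h | ⟨rfl, rfl⟩ | ⟨rfl, rfl⟩ | ⟨rfl, hy', hyc⟩ | ⟨hyc, hx', hxc⟩
  · exact h
  · exact absurd hy (hdisj _ hq)
  · exact absurd hx (hdisj _ hq)
  · exact absurd hx (hdisj _ hcW)
  · exact absurd hx (hdisj _ hx')

lemma attach_connected (hR : R.Connected) : (A).Connected := by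
  rw [SimpleGraph.Subgraph.connected_iff', connected_iff_exists_forall_reachable]
  refine ⟨⟨p, Or.inl hpR⟩, ?_⟩
  rintro ⟨v, hv | hv⟩
  · have hr := hR.coe ⟨p, hpR⟩ ⟨v, hv⟩
    have := hr.map (SimpleGraph.Subgraph.inclusion (attach_le R p q c W hpR hq hcW hdisj hpq hfan))
    exact this
  · have hpq' : (A).coe.Adj ⟨p, Or.inl hpR⟩ ⟨q, Or.inr hq⟩ :=
      Or.inr (Or.inl ⟨rfl, rfl⟩)
    have hqc : (A).coe.Reachable ⟨p, Or.inl hpR⟩ ⟨c, Or.inr hcW⟩ := by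
      by_cases hqceq : q = c
      · subst hqceq
        exact hpq'.reachable
      · refine hpq'.reachable.trans (SimpleGraph.Adj.reachable ?_)
        exact Or.inr (Or.inr (Or.inr (Or.inr ⟨rfl, hq, hqceq⟩)))
    by_cases hvc : v = c
    · subst hvc
      exact hqc
    · refine hqc.trans (SimpleGraph.Adj.reachable ?_)
      exact Or.inr (Or.inr (Or.inr (Or.inl ⟨rfl, hv, hvc⟩)))

lemma attach_acyclic (hR : R.spanningCoe.IsAcyclic) : (A).spanningCoe.IsAcyclic := by
  classical
  set U : SimpleGraph V := ((R.spanningCoe ⊔ SimpleGraph.fromEdgeSet {s(p, q)})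
      ⊔ SimpleGraph.fromEdgeSet {s(c, q)})
      ⊔ SimpleGraph.fromEdgeSet ((fun ℓ => s(c, ℓ)) '' ((W \ {c}) \ {q})) with hU
  have hU1 : (R.spanningCoe ⊔ SimpleGraph.fromEdgeSet {s(p, q)}).IsAcyclic := by
    apply pendant_acyclic hR
    rintro ⟨y, hy⟩
    exact hdisj q hq (SimpleGraph.Subgraph.Adj.fst_mem (hy : R.Adj q y))
  have hU2 : ((R.spanningCoe ⊔ SimpleGraph.fromEdgeSet {s(p, q)})
      ⊔ SimpleGraph.fromEdgeSet {s(c, q)}).IsAcyclic := by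
    by_cases hcq : c = q
    · subst hcq
      have hbot : SimpleGraph.fromEdgeSet {s(c, c)} = (⊥ : SimpleGraph V) := by
        ext x y
        simp only [fromEdgeSet_adj, Set.mem_singleton_iff, bot_adj, iff_false, not_and]
        intro he hne
        rw [Sym2.eq_iff] at he
        rcases he with ⟨rfl, rfl⟩ | ⟨rfl, rfl⟩ <;> exact hne rfl
      rw [hbot, sup_bot_eq]
      exact hU1
    · have hswap : s(c, q) = s(q, c) := Sym2.eq_swap
      rw [hswap]
      apply pendant_acyclic hU1
      rintro ⟨y, hy | hy⟩
      · exact hdisj c hcW (SimpleGraph.Subgraph.Adj.fst_mem (hy : R.Adj c y))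
      · rw [fromEdgeSet_adj] at hy
        obtain ⟨he, -⟩ := hy
        rw [Set.mem_singleton_iff, Sym2.eq_iff] at he
        rcases he with ⟨h1, h2⟩ | ⟨h1, h2⟩
        · exact hdisj c hcW (by rw [h1]; exact hpR)
        · exact hcq h1
  have hUac : U.IsAcyclic := by
    apply fan_acyclic hU2 c _ (Set.toFinite _)
    intro ℓ hℓ
    obtain ⟨⟨hℓW, hℓc⟩, hℓq⟩ := hℓ
    rw [Set.mem_singleton_iff] at hℓc hℓq
    refine ⟨?_, hℓc⟩
    rintro ⟨y, (hy | hy) | hy⟩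
    · exact hdisj ℓ hℓW (SimpleGraph.Subgraph.Adj.fst_mem (hy : R.Adj ℓ y))
    · rw [fromEdgeSet_adj] at hy
      obtain ⟨he, -⟩ := hy
      rw [Set.mem_singleton_iff, Sym2.eq_iff] at he
      rcases he with ⟨h1, h2⟩ | ⟨h1, h2⟩
      · exact hdisj ℓ hℓW (by rw [h1]; exact hpR)
      · exact hℓq h1
    · rw [fromEdgeSet_adj] at hy
      obtain ⟨he, -⟩ := hy
      rw [Set.mem_singleton_iff, Sym2.eq_iff] at he
      rcases he with ⟨rfl, rfl⟩ | ⟨rfl, rfl⟩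
      · exact hℓc rfl
      · exact hℓq rfl
  apply acyclic_anti ?_ hUac
  intro x y h
  have h' : (A).Adj x y := h
  have hGxy : G.Adj x y := (A).adj_sub h'
  rcases h' with h' | ⟨rfl, rfl⟩ | ⟨rfl, rfl⟩ | ⟨rfl, hy', hyc⟩ | ⟨rfl, hx', hxc⟩
  · exact Or.inl (Or.inl (Or.inl h'))
  · exact Or.inl (Or.inl (Or.inr (by rw [fromEdgeSet_adj]; exact ⟨rfl, hGxy.ne⟩)))
  · exact Or.inl (Or.inl (Or.inr (by rw [fromEdgeSet_adj]; exact ⟨Sym2.eq_swap, hGxy.ne⟩)))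
  · by_cases hyq : y = q
    · subst hyq
      exact Or.inl (Or.inr (by rw [fromEdgeSet_adj]; exact ⟨rfl, hGxy.ne⟩))
    · exact Or.inr (by
        rw [fromEdgeSet_adj]
        exact ⟨⟨y, ⟨⟨hy', hyc⟩, hyq⟩, rfl⟩, hGxy.ne⟩)
  · by_cases hxq : x = q
    · subst hxq
      exact Or.inl (Or.inr (by rw [fromEdgeSet_adj]; exact ⟨Sym2.eq_swap, hGxy.ne⟩))
    · exact Or.inr (by
        rw [fromEdgeSet_adj]
        refine ⟨⟨x, ⟨⟨hx', hxc⟩, hxq⟩, ?_⟩, hGxy.ne⟩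
        exact Sym2.eq_swap)

lemma attach_tree (hR : R.Connected) (hRac : R.spanningCoe.IsAcyclic) :
    (A).coe.IsTree := by
  constructor
  · exact (attach_connected R p q c W hpR hq hcW hdisj hpq hfan hR).coe
  · exact coe_acyclic_of_spanningCoe _
      (attach_acyclic R p q c W hpR hq hcW hdisj hpq hfan hRac)

lemma attach_ncard_lt : R.edgeSet.ncard < (A).edgeSet.ncard := by
  apply Set.ncard_lt_ncard ?_ (Set.toFinite _)
  constructor
  · exact SimpleGraph.Subgraph.edgeSet_mono (attach_le R p q c W hpR hq hcW hdisj hpq hfan)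
  · intro hsub
    have hmem : s(p, q) ∈ (A).edgeSet := by
      rw [SimpleGraph.Subgraph.mem_edgeSet]
      exact Or.inr (Or.inl ⟨rfl, rfl⟩)
    have := hsub hmem
    rw [SimpleGraph.Subgraph.mem_edgeSet] at this
    exact hdisj q hq this.snd_mem

lemma attach_subdeg_of_ne {v : V} (hvp : v ≠ p) (hvW : v ∉ W) :
    subdeg (A) v = subdeg R v := by
  rw [subdeg_eq, subdeg_eq]
  congr 1
  ext y
  simp only [SimpleGraph.Subgraph.mem_neighborSet]
  constructor
  · rintro (h | ⟨rfl, rfl⟩ | ⟨rfl, rfl⟩ | ⟨rfl, hy', hyc⟩ | ⟨hyc, hx', hxc⟩)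
    · exact h
    · exact absurd rfl hvp
    · exact absurd hq hvW
    · exact absurd hcW hvW
    · exact absurd hx' hvW
  · intro h
    exact Or.inl h

lemma attach_subdeg_p : subdeg (A) p = subdeg R p + 1 := by
  rw [subdeg_eq, subdeg_eq]
  have hpW : p ∉ W := fun hp => hdisj p hp hpR
  have hnb : (A).neighborSet p = insert q (R.neighborSet p) := by
    ext y
    simp only [SimpleGraph.Subgraph.mem_neighborSet, Set.mem_insert_iff]
    constructor
    · rintro (h | ⟨-, rfl⟩ | ⟨h1, -⟩ | ⟨h1, -⟩ | ⟨hyc, hx', hxc⟩)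
      · exact Or.inr h
      · exact Or.inl rfl
      · exact absurd hq (h1 ▸ hpW)
      · exact absurd hcW (h1 ▸ hpW)
      · exact absurd hx' hpW
    · rintro (rfl | h)
      · exact Or.inr (Or.inl ⟨rfl, rfl⟩)
      · exact Or.inl h
  rw [hnb]
  rw [Set.ncard_insert_of_notMem (fun hmem => hdisj q hq
    (R.neighborSet_subset_verts p hmem)) (Set.toFinite _)]

lemma attach_subdeg_leaf {ℓ : V} (hℓW : ℓ ∈ W) (hℓc : ℓ ≠ c) (hℓq : ℓ ≠ q) :
    subdeg (A) ℓ = 1 := by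
  rw [subdeg_eq]
  have hℓR : ℓ ∉ R.verts := hdisj ℓ hℓW
  have hnb : (A).neighborSet ℓ = {c} := by
    ext y
    simp only [SimpleGraph.Subgraph.mem_neighborSet, Set.mem_singleton_iff]
    constructor
    · rintro (h | ⟨rfl, -⟩ | ⟨h1, -⟩ | ⟨h1, -⟩ | ⟨rfl, -, -⟩)
      · exact absurd h.fst_mem hℓR
      · exact absurd hpR hℓR
      · exact absurd h1 hℓq
      · exact absurd h1 hℓc
      · rfl
    · rintro rfl
      exact Or.inr (Or.inr (Or.inr (Or.inr ⟨rfl, hℓW, hℓc⟩)))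
  rw [hnb, Set.ncard_singleton]

lemma attach_subdeg_q (hqc : q ≠ c) : subdeg (A) q = 2 := by
  rw [subdeg_eq]
  have hqR : q ∉ R.verts := hdisj q hq
  have hnb : (A).neighborSet q = {p, c} := by
    ext y
    simp only [SimpleGraph.Subgraph.mem_neighborSet, Set.mem_insert_iff,
      Set.mem_singleton_iff]
    constructor
    · rintro (h | ⟨h1, rfl⟩ | ⟨-, rfl⟩ | ⟨h1, -⟩ | ⟨rfl, -, -⟩)
      · exact absurd h.fst_mem hqR
      · exact absurd hpR (h1 ▸ hqR)
      · exact Or.inl rfl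
      · exact absurd h1 hqc
      · exact Or.inr rfl
    · rintro (rfl | rfl)
      · exact Or.inr (Or.inr (Or.inl ⟨rfl, rfl⟩))
      · exact Or.inr (Or.inr (Or.inr (Or.inr ⟨rfl, hq, hqc⟩)))
  have hpc : p ≠ c := by
    intro hpc
    exact hdisj p (by rw [hpc]; exact hcW) hpR
  rw [hnb, Set.ncard_pair hpc]

lemma attach_subdeg_c (hqc : c ≠ q) : subdeg (A) c = W.ncard - 1 := by
  rw [subdeg_eq]
  have hcR : c ∉ R.verts := hdisj c hcW
  have hnb : (A).neighborSet c = W \ {c} := by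
    ext y
    simp only [SimpleGraph.Subgraph.mem_neighborSet, Set.mem_diff,
      Set.mem_singleton_iff]
    constructor
    · rintro (h | ⟨h1, -⟩ | ⟨h1, -⟩ | ⟨-, hy', hyc⟩ | ⟨rfl, h2, h3⟩)
      · exact absurd h.fst_mem hcR
      · exact absurd hpR (h1 ▸ hcR)
      · exact absurd h1 hqc
      · exact ⟨hy', hyc⟩
      · exact absurd rfl h3
    · rintro ⟨hyW, hyc⟩
      exact Or.inr (Or.inr (Or.inr (Or.inl ⟨rfl, hyW, hyc⟩)))
  rw [hnb, Set.ncard_diff_singleton_of_mem hcW]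

lemma attach_subdeg_c_eq_q (hqc : c = q) : subdeg (A) c = W.ncard := by
  rw [subdeg_eq]
  have hcR : c ∉ R.verts := hdisj c hcW
  have hnb : (A).neighborSet c = insert p (W \ {c}) := by
    ext y
    simp only [SimpleGraph.Subgraph.mem_neighborSet, Set.mem_insert_iff, Set.mem_diff,
      Set.mem_singleton_iff]
    constructor
    · rintro (h | ⟨h1, -⟩ | ⟨-, rfl⟩ | ⟨-, hy', hyc⟩ | ⟨rfl, h2, h3⟩)
      · exact absurd h.fst_mem hcR
      · exact absurd hpR (h1 ▸ hcR)
      · exact Or.inl rfl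
      · exact Or.inr ⟨hy', hyc⟩
      · exact absurd rfl h3
    · rintro (rfl | ⟨hyW, hyc⟩)
      · exact Or.inr (Or.inr (Or.inl ⟨hqc ▸ rfl, rfl⟩))
      · exact Or.inr (Or.inr (Or.inr (Or.inl ⟨rfl, hyW, hyc⟩)))
  rw [hnb]
  rw [Set.ncard_insert_of_notMem (fun hmem => hdisj p hmem.1 hpR) (Set.toFinite _)]
  rw [Set.ncard_diff_singleton_of_mem hcW]
  have : 0 < W.ncard := (Set.ncard_pos (Set.toFinite _)).mpr ⟨c, hcW⟩
  omega

end Attach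

/-- Claim 1 of Lemma 5: with `G` connected, triangle-free, of minimum degree at least 3,
`S` a star-cover with stars of size at least 6, and `T` a tree in `G` of maximal size
subject to conditions (1)–(3), every vertex `a` of `T` with a neighbour `u ∉ V(T)` in `G`
has degree 1 in `T`, and `u` has degree 1 in `G − V(T)`. -/
theorem stmt_16 (V : Type) [Fintype V] (G : SimpleGraph V)
    (hconn : G.Connected) (htf : G.CliqueFree 3) (hdeg : ∀ v, 3 ≤ gdeg G v)
    (m : ℕ) (S : Fin m → G.Subgraph)
    (hstar : ∀ i, IsStar (S i)) (hsize : ∀ i, 6 ≤ (S i).edgeSet.ncard)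
    (hdisj : ∀ i j, i ≠ j → Disjoint (S i).verts (S j).verts)
    (hcov : ∀ w : V, ∃ i, w ∈ (S i).verts)
    (T : G.Subgraph) (hT : T.coe.IsTree)
    (h1 : ∀ a b : V, T.Adj a b → ¬(subdeg T a = 2 ∧ subdeg T b = 2))
    (h2 : ∃ I : Set (Fin m), T.vertsᶜ = ⋃ i ∈ I, (S i).verts)
    (h3 : ∀ a : V, subdeg T a = 1 → (∃ u, u ∉ T.verts ∧ G.Adj a u) →
      ∀ w, T.Adj a w → 5 ≤ subdeg T w)
    (hmax : ∀ T' : G.Subgraph, T'.coe.IsTree →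
      (∀ a b : V, T'.Adj a b → ¬(subdeg T' a = 2 ∧ subdeg T' b = 2)) →
      (∃ I : Set (Fin m), T'.vertsᶜ = ⋃ i ∈ I, (S i).verts) →
      (∀ a : V, subdeg T' a = 1 → (∃ u, u ∉ T'.verts ∧ G.Adj a u) →
        ∀ w, T'.Adj a w → 5 ≤ subdeg T' w) →
      T'.edgeSet.ncard ≤ T.edgeSet.ncard)
    :
    ∀ a ∈ T.verts, ∀ u : V, G.Adj a u → u ∉ T.verts →
      subdeg T a = 1 ∧ (G.neighborSet u \ T.verts).ncard = 1 := by
  classical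
  intro a ha u hadj hu
  obtain ⟨I, hI⟩ := h2
  have hmemcompl : ∀ {x : V}, x ∉ T.verts → ∃ j ∈ I, x ∈ (S j).verts := by
    intro x hx
    have hx' : x ∈ T.vertsᶜ := hx
    rw [hI] at hx'
    simpa using hx'
  have hIout : ∀ j ∈ I, ∀ w ∈ (S j).verts, w ∉ T.verts := by
    intro j hj w hw hwT
    have : w ∈ T.vertsᶜ := by rw [hI]; exact Set.mem_biUnion hj hw
    exact this hwT
  obtain ⟨i, hiI, hui⟩ := hmemcompl hu
  obtain ⟨c, hcW, hcadj, hW7⟩ := star_structure (hstar i) (hsize i)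
  have hdisjW : ∀ w ∈ (S i).verts, w ∉ T.verts := hIout i hiI
  have hfanW : ∀ ℓ ∈ (S i).verts, ℓ ≠ c → G.Adj c ℓ :=
    fun ℓ hℓ hℓc => (S i).adj_sub (hcadj ℓ hℓ hℓc)
  have hTconn : T.Connected := SimpleGraph.Subgraph.connected_iff'.mpr hT.isConnected
  have hTac : T.spanningCoe.IsAcyclic := spanningCoe_acyclic_of_coe T hT.IsAcyclic
  -- T has at least two vertices, so a has positive degree
  have hTdeg1 : 1 ≤ subdeg T a := by
    obtain ⟨k, hak⟩ := hcov a
    have hkT : ∀ w ∈ (S k).verts, w ∈ T.verts := by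
      intro w hw
      by_contra hwT
      obtain ⟨k', hk', hwk'⟩ := hmemcompl hwT
      have hkk : k' = k := by
        by_contra hne
        exact Set.disjoint_left.mp (hdisj k' k hne) hwk' hw
      subst hkk
      exact hIout k' hk' a hak ha
    obtain ⟨ck, hckv, hckadj, h7k⟩ := star_structure (hstar k) (hsize k)
    obtain ⟨w, hwk, hwa⟩ : ((S k).verts \ {a}).Nonempty := by
      apply nonempty_diff_of_ncard_lt ?_ (Set.toFinite _)
      rw [Set.ncard_singleton]; omega
    rw [Set.mem_singleton_iff] at hwa
    obtain ⟨wk⟩ := hT.isConnected ⟨a, ha⟩ ⟨w, hkT w hwk⟩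
    obtain ⟨y, hy⟩ := exists_adj_of_walk wk (by
      intro hh
      exact hwa (congrArg Subtype.val hh).symm)
    have hay : T.Adj a ↑y := hy
    rw [subdeg_eq]
    have : 0 < (T.neighborSet a).ncard := (Set.ncard_pos (Set.toFinite _)).mpr ⟨↑y, hay⟩
    omega
  -- extension of T by the star S i, attached through the edge a-u
  have key1 : (2 ≤ subdeg T a ∨ (u = c ∧ ∀ w, T.Adj a w → 5 ≤ subdeg T w)) → False := by
    intro hcase
    set T1 := attach T a u c (S i).verts ha hui hcW hdisjW hadj hfanW with hT1
    have dT1a : subdeg T1 a = subdeg T a + 1 :=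
      attach_subdeg_p T a u c (S i).verts ha hui hcW hdisjW hadj hfanW
    have dT1kept : ∀ v, v ≠ a → v ∉ (S i).verts → subdeg T1 v = subdeg T v :=
      fun v h1' h2' => attach_subdeg_of_ne T a u c (S i).verts ha hui hcW hdisjW hadj hfanW h1' h2'
    have dT1c : u ≠ c → subdeg T1 c = (S i).verts.ncard - 1 :=
      fun h => attach_subdeg_c T a u c (S i).verts ha hui hcW hdisjW hadj hfanW (Ne.symm h)
    have dT1cq : u = c → subdeg T1 c = (S i).verts.ncard :=
      fun h => attach_subdeg_c_eq_q T a u c (S i).verts ha hui hcW hdisjW hadj hfanW h.symm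
    have dT1u : u ≠ c → subdeg T1 u = 2 :=
      fun h => attach_subdeg_q T a u c (S i).verts ha hui hcW hdisjW hadj hfanW h
    have htree : T1.coe.IsTree :=
      attach_tree T a u c (S i).verts ha hui hcW hdisjW hadj hfanW hTconn hTac
    have hc1 : ∀ x y, T1.Adj x y → ¬(subdeg T1 x = 2 ∧ subdeg T1 y = 2) := by
      rintro x y hxy ⟨h2x, h2y⟩
      rcases hxy with hTxy | ⟨hx', hy'⟩ | ⟨hx', hy'⟩ | ⟨hx', hyW, hyc⟩ | ⟨hy', hxW, hxc⟩
      · have hxT := hTxy.fst_mem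
        have hyT := hTxy.snd_mem
        by_cases hxa : x = a
        · have hya : y ≠ a := by
            intro hya
            exact (T.adj_sub hTxy).ne (by rw [hxa, hya])
          have hy2' : subdeg T1 y = subdeg T y := dT1kept y hya (fun hW => hdisjW y hW hyT)
          rcases hcase with hge | ⟨-, h5⟩
          · rw [hxa, dT1a] at h2x; omega
          · have h5y := h5 y (by rw [← hxa]; exact hTxy)
            rw [hy2'] at h2y; omega
        · by_cases hya : y = a
          · have hx2' : subdeg T1 x = subdeg T x := dT1kept x hxa (fun hW => hdisjW x hW hxT)
            rcases hcase with hge | ⟨-, h5⟩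
            · rw [hya, dT1a] at h2y; omega
            · have h5x := h5 x (by rw [← hya]; exact hTxy.symm)
              rw [hx2'] at h2x; omega
          · refine h1 x y hTxy ⟨?_, ?_⟩
            · rw [← dT1kept x hxa (fun h => hdisjW x h hxT)]; exact h2x
            · rw [← dT1kept y hya (fun h => hdisjW y h hyT)]; exact h2y
      · by_cases huc : u = c
        · rw [hy', huc, dT1cq huc] at h2y; omega
        · rw [hx', dT1a] at h2x
          rcases hcase with hge | ⟨huc', -⟩
          · omega
          · exact huc huc'
      · by_cases huc : u = c
        · rw [hx', huc, dT1cq huc] at h2x; omega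
        · rw [hy', dT1a] at h2y
          rcases hcase with hge | ⟨huc', -⟩
          · omega
          · exact huc huc'
      · by_cases huc : u = c
        · rw [hx', dT1cq huc] at h2x; omega
        · rw [hx', dT1c huc] at h2x; omega
      · by_cases huc : u = c
        · rw [hy', dT1cq huc] at h2y; omega
        · rw [hy', dT1c huc] at h2y; omega
    have hc2 : ∃ I' : Set (Fin m), T1.vertsᶜ = ⋃ j ∈ I', (S j).verts := by
      refine ⟨I \ {i}, ?_⟩
      ext x
      simp only [Set.mem_compl_iff, Set.mem_iUnion, Set.mem_diff, Set.mem_singleton_iff,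
        exists_prop]
      constructor
      · intro hx
        have hx' : x ∉ T.verts ∪ (S i).verts := hx
        rw [Set.mem_union] at hx'
        push_neg at hx'
        obtain ⟨j, hj, hxj⟩ := hmemcompl hx'.1
        refine ⟨j, ⟨hj, ?_⟩, hxj⟩
        rintro rfl
        exact hx'.2 hxj
      · rintro ⟨j, ⟨hjI, hji⟩, hxj⟩
        intro hmem
        have hmem' : x ∈ T.verts ∪ (S i).verts := hmem
        rcases hmem' with h | h
        · exact hIout j hjI x hxj h
        · exact Set.disjoint_left.mp (hdisj j i hji) hxj h
    have hc3 : ∀ z, subdeg T1 z = 1 → (∃ u', u' ∉ T1.verts ∧ G.Adj z u') →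
        ∀ w, T1.Adj z w → 5 ≤ subdeg T1 w := by
      rintro z hz1 ⟨u', hu'nv, hu'adj⟩ w hzw
      by_cases hzT : z ∈ T.verts
      · by_cases hza : z = a
        · rw [hza, dT1a] at hz1; omega
        · have hzW : z ∉ (S i).verts := fun h => hdisjW z h hzT
          have hz1' : subdeg T z = 1 := by rw [← dT1kept z hza hzW]; exact hz1
          have h5 := h3 z hz1' ⟨u', fun hmem => hu'nv (Or.inl hmem), hu'adj⟩
          have hTzw : T.Adj z w := by
            rcases hzw with hTzw | ⟨hh, -⟩ | ⟨hh, -⟩ | ⟨hh, -⟩ | ⟨-, hh, -⟩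
            · exact hTzw
            · exact absurd hh hza
            · exact absurd (by rw [← hh]; exact hzT : u ∈ T.verts) hu
            · exact absurd (by rw [hh]; exact hcW : z ∈ (S i).verts) hzW
            · exact absurd hh hzW
          have h5w := h5 w hTzw
          by_cases hwa : w = a
          · rw [hwa] at h5w ⊢
            rw [dT1a]; omega
          · rw [dT1kept w hwa (fun h => hdisjW w h hTzw.snd_mem)]
            exact h5w
      · have hzW : z ∈ (S i).verts := by
          have hzv : z ∈ T.verts ∪ (S i).verts := hzw.fst_mem
          rcases hzv with h | h
          · exact absurd h hzT
          · exact h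
        have hzc : z ≠ c := by
          intro hzc
          by_cases huc : u = c
          · rw [hzc, dT1cq huc] at hz1; omega
          · rw [hzc, dT1c huc] at hz1; omega
        have hzu : z ≠ u := by
          intro hzu
          have huc : u ≠ c := fun h => hzc (by rw [hzu, h])
          rw [hzu, dT1u huc] at hz1; omega
        have hwc : w = c := by
          rcases hzw with hTzw | ⟨hh, -⟩ | ⟨hh, -⟩ | ⟨hh, -⟩ | ⟨hh, -, -⟩
          · exact absurd hTzw.fst_mem hzT
          · exact absurd (by rw [hh]; exact ha : z ∈ T.verts) hzT
          · exact absurd hh hzu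
          · exact absurd hh hzc
          · exact hh
        rw [hwc]
        by_cases huc : u = c
        · rw [dT1cq huc]; omega
        · rw [dT1c huc]; omega
    have hle := hmax T1 htree hc1 hc2 hc3
    have hlt : T.edgeSet.ncard < T1.edgeSet.ncard :=
      attach_ncard_lt T a u c (S i).verts ha hui hcW hdisjW hadj hfanW
    omega
  have claim1 : subdeg T a = 1 := by
    by_contra hne
    exact key1 (Or.inl (by omega))
  have h3a : ∀ w, T.Adj a w → 5 ≤ subdeg T w := h3 a claim1 ⟨u, hu, hadj⟩
  have claim2 : u ≠ c := fun h => key1 (Or.inr ⟨h, h3a⟩)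
  have claimC : ∀ x, G.Adj u x → x ∉ T.verts → x ∉ (S i).verts → False := by
    intro x hux hxT hxW
    obtain ⟨j, hjI, hxj⟩ := hmemcompl hxT
    have hji : j ≠ i := by
      rintro rfl
      exact hxW hxj
    obtain ⟨c', hc'W, hc'adj, hW7'⟩ := star_structure (hstar j) (hsize j)
    set T1 := attach T a u c (S i).verts ha hui hcW hdisjW hadj hfanW with hT1
    have hu1 : u ∈ T1.verts := Or.inr hui
    have hdisjW' : ∀ w ∈ (S j).verts, w ∉ T1.verts := by
      intro w hw hmem
      have hmem' : w ∈ T.verts ∪ (S i).verts := hmem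
      rcases hmem' with h | h
      · exact hIout j hjI w hw h
      · exact Set.disjoint_left.mp (hdisj j i hji) hw h
    have hfanW' : ∀ ℓ ∈ (S j).verts, ℓ ≠ c' → G.Adj c' ℓ :=
      fun ℓ h1' h2' => (S j).adj_sub (hc'adj ℓ h1' h2')
    set T2 := attach T1 u x c' (S j).verts hu1 hxj hc'W hdisjW' hux hfanW' with hT2
    -- level-1 degrees
    have dT1a : subdeg T1 a = subdeg T a + 1 :=
      attach_subdeg_p T a u c (S i).verts ha hui hcW hdisjW hadj hfanW
    have dT1kept : ∀ v, v ≠ a → v ∉ (S i).verts → subdeg T1 v = subdeg T v :=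
      fun v h1' h2' => attach_subdeg_of_ne T a u c (S i).verts ha hui hcW hdisjW hadj hfanW h1' h2'
    have dT1c : subdeg T1 c = (S i).verts.ncard - 1 :=
      attach_subdeg_c T a u c (S i).verts ha hui hcW hdisjW hadj hfanW (Ne.symm claim2)
    have dT1u : subdeg T1 u = 2 :=
      attach_subdeg_q T a u c (S i).verts ha hui hcW hdisjW hadj hfanW claim2
    -- level-2 degrees
    have dT2u : subdeg T2 u = 3 := by
      rw [attach_subdeg_p T1 u x c' (S j).verts hu1 hxj hc'W hdisjW' hux hfanW', dT1u]
    have dT2kept : ∀ v, v ≠ u → v ∉ (S j).verts → subdeg T2 v = subdeg T1 v :=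
      fun v h1' h2' =>
        attach_subdeg_of_ne T1 u x c' (S j).verts hu1 hxj hc'W hdisjW' hux hfanW' h1' h2'
    have dT2c' : x ≠ c' → subdeg T2 c' = (S j).verts.ncard - 1 :=
      fun h => attach_subdeg_c T1 u x c' (S j).verts hu1 hxj hc'W hdisjW' hux hfanW' (Ne.symm h)
    have dT2cq : x = c' → subdeg T2 c' = (S j).verts.ncard :=
      fun h => attach_subdeg_c_eq_q T1 u x c' (S j).verts hu1 hxj hc'W hdisjW' hux hfanW' h.symm
    have dT2x : x ≠ c' → subdeg T2 x = 2 :=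
      fun h => attach_subdeg_q T1 u x c' (S j).verts hu1 hxj hc'W hdisjW' hux hfanW' h
    -- membership helpers
    have hau : a ≠ u := hadj.ne
    have haW' : a ∉ (S j).verts := fun h => hdisjW' a h (Or.inl ha)
    have hcu : c ≠ u := Ne.symm claim2
    have hcW2 : c ∉ (S j).verts := fun h => hdisjW' c h (Or.inr hcW)
    have dT2a : subdeg T2 a = 2 := by
      rw [dT2kept a hau haW', dT1a, claim1]
    have dT2c : subdeg T2 c = (S i).verts.ncard - 1 := by
      rw [dT2kept c hcu hcW2, dT1c]
    have dT2keptT : ∀ v, v ∈ T.verts → v ≠ a → subdeg T2 v = subdeg T v := by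
      intro v hv hva
      have hvu : v ≠ u := fun h => hu (by rw [← h]; exact hv)
      have hvW' : v ∉ (S j).verts := fun h => hdisjW' v h (Or.inl hv)
      have hvW : v ∉ (S i).verts := fun h => hdisjW v h hv
      rw [dT2kept v hvu hvW', dT1kept v hva hvW]
    have dT2leaf1 : ∀ v ∈ (S i).verts, v ≠ c → v ≠ u → subdeg T2 v = 1 := by
      intro v hv hvc hvu
      have hvW' : v ∉ (S j).verts := fun h => hdisjW' v h (Or.inr hv)
      rw [dT2kept v hvu hvW']
      exact attach_subdeg_leaf T a u c (S i).verts ha hui hcW hdisjW hadj hfanW hv hvc hvu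
    -- the extension is a tree
    have hT1conn : T1.Connected :=
      attach_connected T a u c (S i).verts ha hui hcW hdisjW hadj hfanW hTconn
    have hT1ac : T1.spanningCoe.IsAcyclic :=
      attach_acyclic T a u c (S i).verts ha hui hcW hdisjW hadj hfanW hTac
    have htree2 : T2.coe.IsTree :=
      attach_tree T1 u x c' (S j).verts hu1 hxj hc'W hdisjW' hux hfanW' hT1conn hT1ac
    -- condition (1)
    have hc1' : ∀ y z, T2.Adj y z → ¬(subdeg T2 y = 2 ∧ subdeg T2 z = 2) := by
      rintro y z hyz ⟨h2y, h2z⟩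
      rcases hyz with hT1yz | ⟨hy', hz'⟩ | ⟨hy', hz'⟩ | ⟨hy', hzW, hzc⟩ | ⟨hz', hyW, hyc⟩
      · rcases hT1yz with hTyz | ⟨hy', hz'⟩ | ⟨hy', hz'⟩ | ⟨hy', hzW, hzc⟩ | ⟨hz', hyW, hyc⟩
        · have hyT := hTyz.fst_mem
          have hzT := hTyz.snd_mem
          by_cases hya : y = a
          · have hza : z ≠ a := by
              intro hza
              exact (T.adj_sub hTyz).ne (by rw [hya, hza])
            have h5z := h3a z (by rw [← hya]; exact hTyz)
            rw [dT2keptT z hzT hza] at h2z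
            omega
          · by_cases hza : z = a
            · have h5y := h3a y (by rw [← hza]; exact hTyz.symm)
              rw [dT2keptT y hyT hya] at h2y
              omega
            · rw [dT2keptT y hyT hya] at h2y
              rw [dT2keptT z hzT hza] at h2z
              exact h1 y z hTyz ⟨h2y, h2z⟩
        · rw [hz', dT2u] at h2z; omega
        · rw [hy', dT2u] at h2y; omega
        · rw [hy', dT2c] at h2y; omega
        · rw [hz', dT2c] at h2z; omega
      · rw [hy', dT2u] at h2y; omega
      · rw [hz', dT2u] at h2z; omega
      · by_cases hxc' : x = c'
        · rw [hy', dT2cq hxc'] at h2y; omega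
        · rw [hy', dT2c' hxc'] at h2y; omega
      · by_cases hxc' : x = c'
        · rw [hz', dT2cq hxc'] at h2z; omega
        · rw [hz', dT2c' hxc'] at h2z; omega
    -- condition (2)
    have hc2' : ∃ I' : Set (Fin m), T2.vertsᶜ = ⋃ k ∈ I', (S k).verts := by
      refine ⟨I \ {i, j}, ?_⟩
      ext y
      simp only [Set.mem_compl_iff, Set.mem_iUnion, Set.mem_diff, Set.mem_insert_iff,
        Set.mem_singleton_iff, exists_prop]
      constructor
      · intro hy
        have hy' : y ∉ (T.verts ∪ (S i).verts) ∪ (S j).verts := hy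
        rw [Set.mem_union, Set.mem_union] at hy'
        push_neg at hy'
        obtain ⟨⟨hyT, hyW⟩, hyW'⟩ := hy'
        obtain ⟨k, hk, hyk⟩ := hmemcompl hyT
        refine ⟨k, ⟨hk, ?_⟩, hyk⟩
        push_neg
        constructor
        · rintro rfl; exact hyW hyk
        · rintro rfl; exact hyW' hyk
      · rintro ⟨k, ⟨hkI, hkij⟩, hyk⟩
        push_neg at hkij
        intro hmem
        have hmem' : y ∈ (T.verts ∪ (S i).verts) ∪ (S j).verts := hmem
        rcases hmem' with (h | h) | h
        · exact hIout k hkI y hyk h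
        · exact Set.disjoint_left.mp (hdisj k i hkij.1) hyk h
        · exact Set.disjoint_left.mp (hdisj k j hkij.2) hyk h
    -- condition (3)
    have hc3' : ∀ z, subdeg T2 z = 1 → (∃ u', u' ∉ T2.verts ∧ G.Adj z u') →
        ∀ w, T2.Adj z w → 5 ≤ subdeg T2 w := by
      rintro z hz1 ⟨u', hu'nv, hu'adj⟩ w hzw
      by_cases hzT : z ∈ T.verts
      · by_cases hza : z = a
        · rw [hza, dT2a] at hz1; omega
        · have hzW : z ∉ (S i).verts := fun h => hdisjW z h hzT
          have hzW' : z ∉ (S j).verts := fun h => hdisjW' z h (Or.inl hzT)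
          have hz1' : subdeg T z = 1 := by rw [← dT2keptT z hzT hza]; exact hz1
          have h5 := h3 z hz1' ⟨u', fun hmem => hu'nv (Or.inl (Or.inl hmem)), hu'adj⟩
          have hzu : z ≠ u := fun h => hu (by rw [← h]; exact hzT)
          have hTzw : T.Adj z w := by
            rcases hzw with hT1zw | ⟨hh, -⟩ | ⟨hh, -⟩ | ⟨hh, -⟩ | ⟨-, hh, -⟩
            · rcases hT1zw with hTzw | ⟨hh, -⟩ | ⟨hh, -⟩ | ⟨hh, -⟩ | ⟨-, hh, -⟩
              · exact hTzw
              · exact absurd hh hza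
              · exact absurd hh hzu
              · exact absurd (by rw [hh]; exact hcW : z ∈ (S i).verts) hzW
              · exact absurd hh hzW
            · exact absurd hh hzu
            · exact absurd (by rw [hh]; exact hxj : z ∈ (S j).verts) hzW'
            · exact absurd (by rw [hh]; exact hc'W : z ∈ (S j).verts) hzW'
            · exact absurd hh hzW'
          have h5w := h5 w hTzw
          by_cases hwa : w = a
          · rw [hwa] at h5w
            rw [claim1] at h5w
            omega
          · rw [dT2keptT w hTzw.snd_mem hwa]
            exact h5w
      · by_cases hzW : z ∈ (S i).verts
        · have hzW' : z ∉ (S j).verts := fun h => hdisjW' z h (Or.inr hzW)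
          have hzc : z ≠ c := by
            intro hzc
            rw [hzc, dT2c] at hz1; omega
          have hzu : z ≠ u := by
            intro hzu
            rw [hzu, dT2u] at hz1; omega
          have hwc : w = c := by
            rcases hzw with hT1zw | ⟨hh, -⟩ | ⟨hh, -⟩ | ⟨hh, -⟩ | ⟨-, hh, -⟩
            · rcases hT1zw with hTzw | ⟨hh, -⟩ | ⟨hh, -⟩ | ⟨hh, -⟩ | ⟨hh, -, -⟩
              · exact absurd hTzw.fst_mem hzT
              · exact absurd (by rw [hh]; exact ha : z ∈ T.verts) hzT
              · exact absurd hh hzu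
              · exact absurd hh hzc
              · exact hh
            · exact absurd hh hzu
            · exact absurd (by rw [hh]; exact hxj : z ∈ (S j).verts) hzW'
            · exact absurd (by rw [hh]; exact hc'W : z ∈ (S j).verts) hzW'
            · exact absurd hh hzW'
          rw [hwc, dT2c]
          omega
        · have hzW' : z ∈ (S j).verts := by
            have hzv : z ∈ (T.verts ∪ (S i).verts) ∪ (S j).verts := hzw.fst_mem
            rcases hzv with (h | h) | h
            · exact absurd h hzT
            · exact absurd h hzW
            · exact h
          have hzT1 : z ∉ T1.verts := hdisjW' z hzW'
          have hzc' : z ≠ c' := by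
            intro hzc'
            by_cases hxc' : x = c'
            · rw [hzc', dT2cq hxc'] at hz1; omega
            · rw [hzc', dT2c' hxc'] at hz1; omega
          have hzx : z ≠ x := by
            intro hzx
            by_cases hxc' : x = c'
            · exact hzc' (hzx.trans hxc')
            · rw [hzx, dT2x hxc'] at hz1; omega
          have hwc' : w = c' := by
            rcases hzw with hT1zw | ⟨hh, -⟩ | ⟨hh, -⟩ | ⟨hh, -⟩ | ⟨hh, -, -⟩
            · exact absurd hT1zw.fst_mem hzT1
            · exact absurd (by rw [hh]; exact hu1 : z ∈ T1.verts) hzT1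
            · exact absurd hh hzx
            · exact absurd hh hzc'
            · exact hh
          rw [hwc']
          by_cases hxc' : x = c'
          · rw [dT2cq hxc']; omega
          · rw [dT2c' hxc']; omega
    have hle := hmax T2 htree2 hc1' hc2' hc3'
    have hlt1 : T.edgeSet.ncard < T1.edgeSet.ncard :=
      attach_ncard_lt T a u c (S i).verts ha hui hcW hdisjW hadj hfanW
    have hlt2 : T1.edgeSet.ncard < T2.edgeSet.ncard :=
      attach_ncard_lt T1 u x c' (S j).verts hu1 hxj hc'W hdisjW' hux hfanW'
    omega
  refine ⟨claim1, ?_⟩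
  have hset : G.neighborSet u \ T.verts = {c} := by
    ext x
    simp only [Set.mem_diff, SimpleGraph.mem_neighborSet, Set.mem_singleton_iff]
    constructor
    · rintro ⟨hux, hxT⟩
      by_cases hxW : x ∈ (S i).verts
      · by_contra hxc
        have hGcu : G.Adj c u := (S i).adj_sub (hcadj u hui claim2)
        have hGcx : G.Adj c x := (S i).adj_sub (hcadj x hxW hxc)
        exact htf {u, x, c} (SimpleGraph.is3Clique_triple_iff.mpr ⟨hux, hGcu.symm, hGcx.symm⟩)
      · exact (claimC x hux hxT hxW).elim
    · intro hxc
      rw [hxc]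
      exact ⟨((S i).adj_sub (hcadj u hui claim2)).symm, hdisjW c hcW⟩
  rw [hset, Set.ncard_singleton]
end
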